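/- arXiv:0705.0965 — 8 statements merged into one kernel-verified Lean document; each statement's English description precedes it below -/
import Mathlib

section
/- Define Γ_d(k) = ∏_{i=d-k}^{d-1} γ_{i+1}^{1/(2i)}, where γ_n denotes Hermite's constant in dimension n. Assuming only the bound γ_n ≤ (n+4)/4 for all n ≥ 2, one has Γ_d(k) ≤ (√d)^{log(d/(d-k))} for all integers 1 ≤ k < d. -/
open Finset

private lemma log32_le : Real.log (3/2) ≤ 11/25 := by
  have h1 : ((3:ℝ)/2)^(25:ℕ) ≤ Real.exp 11 := by
    calc ((3:ℝ)/2)^(25:ℕ) ≤ (2.7182818283:ℝ)^(11:ℕ) := by norm_num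
      _ ≤ (Real.exp 1)^(11:ℕ) :=
          pow_le_pow_left₀ (by norm_num) Real.exp_one_gt_d9.le 11
      _ = Real.exp 11 := by rw [← Real.exp_nat_mul]; norm_num
  have h2 : Real.log (((3:ℝ)/2)^(25:ℕ)) ≤ Real.log (Real.exp 11) :=
    Real.log_le_log (by positivity) h1
  rw [Real.log_pow, Real.log_exp] at h2
  push_cast at h2
  linarith

private lemma Hlem (n : ℕ) (hn : 3 ≤ n) :
    (n:ℝ) * Real.log (((n:ℝ)+4)/4) ≤ ((n:ℝ)-1) * Real.log n := by
  induction n, hn using Nat.le_induction with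
  | base =>
    have h : Real.log (((7:ℝ)/4)^(3:ℕ)) ≤ Real.log (((3:ℝ))^(2:ℕ)) :=
      Real.log_le_log (by positivity) (by norm_num)
    rw [Real.log_pow, Real.log_pow] at h
    push_cast at h ⊢
    norm_num at h ⊢
    linarith
  | succ n hn ih =>
    have hx3 : (3:ℝ) ≤ (n:ℝ) := by exact_mod_cast hn
    set x : ℝ := (n:ℝ) with hxdef
    have h4 : (0:ℝ) < x + 4 := by linarith
    have h5 : (0:ℝ) < x + 5 := by linarith
    have h1p : (0:ℝ) < x + 1 := by linarith
    have hx0 : (0:ℝ) < x := by linarith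
    have e1 : Real.log (x+5) - Real.log (x+4) ≤ 1/(x+4) := by
      have h := Real.log_le_sub_one_of_pos (show (0:ℝ) < (x+5)/(x+4) by positivity)
      rw [Real.log_div (by linarith) (by linarith)] at h
      have heq : (x+5)/(x+4) - 1 = 1/(x+4) := by
        field_simp
        norm_num
      linarith [heq ▸ h]
    have e2 : Real.log x - Real.log (x+1) ≤ -(1/(x+1)) := by
      have h := Real.log_le_sub_one_of_pos (show (0:ℝ) < x/(x+1) by positivity)
      rw [Real.log_div (by linarith) (by linarith)] at h
      have heq : x/(x+1) - 1 = -(1/(x+1)) := by field_simp; ring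
      linarith [heq ▸ h]
    have e3 : Real.log (x+5) - Real.log 4 - Real.log (x+1) ≤ (1-3*x)/(x+1)/4 := by
      have h := Real.log_le_sub_one_of_pos (show (0:ℝ) < (x+5)/(4*(x+1)) by positivity)
      rw [Real.log_div (by linarith) (by positivity), Real.log_mul (by norm_num) (by linarith)] at h
      have heq : (x+5)/(4*(x+1)) - 1 = (1-3*x)/(x+1)/4 := by
        field_simp
        ring
      linarith [heq ▸ h]
    have hb : x * (1/(x+4)) + (x-1) * (-(1/(x+1))) + (1-3*x)/(x+1)/4 ≤ 0 := by
      have heq : x * (1/(x+4)) + (x-1) * (-(1/(x+1))) + (1-3*x)/(x+1)/4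
          = (-3*x^2 - 19*x + 20)/(4*(x+4)*(x+1)) := by field_simp; ring
      rw [heq]
      apply div_nonpos_of_nonpos_of_nonneg
      · nlinarith
      · positivity
    have ih' : x * (Real.log (x+4) - Real.log 4) ≤ (x-1) * Real.log x := by
      have := ih
      rw [Real.log_div (by linarith) (by norm_num)] at this
      exact this
    have E1 : x * (Real.log (x+5) - Real.log (x+4)) ≤ x * (1/(x+4)) :=
      mul_le_mul_of_nonneg_left e1 (by linarith)
    have E2 : (x-1) * (Real.log x - Real.log (x+1)) ≤ (x-1) * (-(1/(x+1))) :=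
      mul_le_mul_of_nonneg_left e2 (by linarith)
    have goal' : (x+1) * (Real.log (x+5) - Real.log 4) ≤ x * Real.log (x+1) := by
      linarith [ih', E1, E2, e3, hb]
    push_cast
    show (x+1) * Real.log ((x+1+4)/4) ≤ (x+1-1) * Real.log (x+1)
    rw [show (x + 1 + 4 : ℝ) = x + 5 by ring, show (x + 1 - 1 : ℝ) = x by ring,
      Real.log_div (by linarith) (by norm_num)]
    exact goal'

private lemma key (i d : ℕ) (hi : 1 ≤ i) (hid : i + 1 ≤ d) :
    1/(2*(i:ℝ)) * Real.log (((i:ℝ)+5)/4) ≤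
      1/2 * Real.log d * (Real.log ((i:ℝ)+1) - Real.log i) := by
  have hd2 : 2 ≤ d := by omega
  have hdR : (2:ℝ) ≤ (d:ℝ) := by exact_mod_cast hd2
  have hlogd0 : 0 ≤ Real.log d := Real.log_nonneg (by linarith)
  rcases eq_or_lt_of_le hi with h1 | h2
  · -- i = 1
    have hi1 : (i:ℝ) = 1 := by exact_mod_cast h1.symm
    rw [hi1]
    have hld : Real.log 2 ≤ Real.log d := Real.log_le_log (by norm_num) hdR
    have l2 := Real.log_two_gt_d9
    have hmul : Real.log 2 * Real.log 2 ≤ Real.log d * Real.log 2 :=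
      mul_le_mul_of_nonneg_right hld (by linarith)
    have h32 : Real.log ((1+5)/4 : ℝ) = Real.log (3/2) := by norm_num
    rw [h32, Real.log_one]
    nlinarith [log32_le, sq_nonneg (Real.log 2 - 0.6931471803)]
  · -- i ≥ 2
    have hi2 : 2 ≤ i := h2
    have hxR : (2:ℝ) ≤ (i:ℝ) := by exact_mod_cast hi2
    set x : ℝ := (i:ℝ) with hxdef
    have hx0 : (0:ℝ) < x := by linarith
    have h1p : (0:ℝ) < x + 1 := by linarith
    have H := Hlem (i+1) (by omega)
    push_cast at H
    -- H : (x+1) * log ((x+1+4)/4) ≤ (x+1-1) * log (x+1)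
    rw [show (x + 1 + 4 : ℝ) = x + 5 by ring] at H
    have H' : (x+1) * Real.log ((x+5)/4) ≤ x * Real.log (x+1) := by
      have : (x + 1 - 1 : ℝ) = x := by ring
      rw [this] at H; exact H
    have e2 : Real.log x - Real.log (x+1) ≤ -(1/(x+1)) := by
      have h := Real.log_le_sub_one_of_pos (show (0:ℝ) < x/(x+1) by positivity)
      rw [Real.log_div (by linarith) (by linarith)] at h
      have heq : x/(x+1) - 1 = -(1/(x+1)) := by field_simp; ring
      linarith [heq ▸ h]
    have hld : Real.log (x+1) ≤ Real.log d := by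
      have : ((i+1:ℕ):ℝ) ≤ (d:ℝ) := by exact_mod_cast hid
      push_cast at this
      exact Real.log_le_log (by linarith) this
    have hl1 : 0 ≤ Real.log (x+1) := Real.log_nonneg (by linarith)
    have hL : Real.log ((x+5)/4) ≤ x * Real.log (x+1) / (x+1) := by
      rw [le_div_iff₀ h1p]
      nlinarith [H']
    have step1 : 1/(2*x) * Real.log ((x+5)/4) ≤ 1/(2*x) * (x * Real.log (x+1) / (x+1)) :=
      mul_le_mul_of_nonneg_left hL (by positivity)
    have heq1 : 1/(2*x) * (x * Real.log (x+1) / (x+1)) = 1/2 * Real.log (x+1) * (1/(x+1)) := by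
      field_simp
    have step2 : 1/2 * Real.log (x+1) * (1/(x+1)) ≤
        1/2 * Real.log d * (Real.log (x+1) - Real.log x) := by
      apply mul_le_mul
      · linarith
      · linarith
      · positivity
      · linarith
    calc 1/(2*x) * Real.log ((x+5)/4) ≤ 1/(2*x) * (x * Real.log (x+1) / (x+1)) := step1
      _ = 1/2 * Real.log (x+1) * (1/(x+1)) := heq1
      _ ≤ 1/2 * Real.log d * (Real.log (x+1) - Real.log x) := step2

private lemma tele (f : ℕ → ℝ) (a b : ℕ) (h : a ≤ b + 1) :
    ∑ i ∈ Icc a b, (f (i+1) - f i) = f (b+1) - f a := by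
  rw [← Finset.Ico_add_one_right_eq_Icc, Finset.sum_Ico_eq_sub _ h, Finset.sum_range_sub, Finset.sum_range_sub]
  ring

theorem Gamma_d_k_bound (γ : ℕ → ℝ) (hγ : ∀ n, 2 ≤ n → 1 ≤ γ n ∧ γ n ≤ (n + 4) / 4)
    (d k : ℕ) (hd : 2 ≤ d) (hk1 : 1 ≤ k) (hk : k < d) :
    ∏ i ∈ Finset.Icc (d - k) (d - 1), γ (i + 1) ^ ((1 : ℝ) / (2 * i)) ≤
      Real.sqrt d ^ Real.log ((d : ℝ) / ((d : ℝ) - (k : ℝ))) := by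
  have hd0 : (0:ℝ) < d := by positivity
  have hd0' : (2:ℝ) ≤ (d:ℝ) := by exact_mod_cast hd
  have hdkpos : (0:ℝ) < (d:ℝ) - (k:ℝ) := by
    have : (k:ℝ) < (d:ℝ) := by exact_mod_cast hk
    linarith
  have hcast : ((d-k:ℕ):ℝ) = (d:ℝ) - (k:ℝ) := by
    push_cast [Nat.cast_sub hk.le]; ring
  have hmem : ∀ i ∈ Finset.Icc (d-k) (d-1), 1 ≤ i ∧ i + 1 ≤ d := by
    intro i hi
    rw [Finset.mem_Icc] at hi
    omega
  have h1 : ∏ i ∈ Finset.Icc (d-k) (d-1), γ (i + 1) ^ ((1 : ℝ) / (2 * i)) ≤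
      ∏ i ∈ Finset.Icc (d-k) (d-1), Real.exp (1/(2*(i:ℝ)) * Real.log (((i:ℝ)+5)/4)) := by
    apply Finset.prod_le_prod
    · intro i hi
      obtain ⟨hi1, hi2⟩ := hmem i hi
      have hγi := (hγ (i+1) (by omega)).1
      exact Real.rpow_nonneg (by linarith) _
    · intro i hi
      obtain ⟨hi1, hi2⟩ := hmem i hi
      have hγi := hγ (i+1) (by omega)
      have hub : γ (i+1) ≤ ((i:ℝ)+5)/4 := by
        have := hγi.2
        push_cast at this
        linarith
      have hpos : (0:ℝ) < ((i:ℝ)+5)/4 := by positivity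
      calc γ (i + 1) ^ ((1 : ℝ) / (2 * i)) ≤ (((i:ℝ)+5)/4) ^ ((1 : ℝ) / (2 * i)) :=
            Real.rpow_le_rpow (by linarith [hγi.1]) hub (by positivity)
        _ = Real.exp (1/(2*(i:ℝ)) * Real.log (((i:ℝ)+5)/4)) := by
            rw [Real.rpow_def_of_pos hpos, mul_comm]
  rw [← Real.exp_sum] at h1
  have h2 : ∑ i ∈ Finset.Icc (d-k) (d-1), 1/(2*(i:ℝ)) * Real.log (((i:ℝ)+5)/4) ≤
      ∑ i ∈ Finset.Icc (d-k) (d-1),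
        (1/2 * Real.log d * (Real.log ((i+1:ℕ):ℝ) - Real.log (i:ℝ))) := by
    apply Finset.sum_le_sum
    intro i hi
    obtain ⟨hi1, hi2⟩ := hmem i hi
    have := key i d hi1 hi2
    push_cast
    push_cast at this
    exact this
  have h3 : ∑ i ∈ Finset.Icc (d-k) (d-1),
        (1/2 * Real.log d * (Real.log ((i+1:ℕ):ℝ) - Real.log (i:ℝ)))
      = 1/2 * Real.log d * (Real.log (d:ℝ) - Real.log ((d:ℝ)-(k:ℝ))) := by
    rw [← Finset.mul_sum, tele (fun n => Real.log (n:ℝ)) (d-k) (d-1) (by omega)]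
    have hb1 : d - 1 + 1 = d := by omega
    rw [hb1, hcast]
  have hRHS : Real.sqrt d ^ Real.log ((d : ℝ) / ((d : ℝ) - (k : ℝ)))
      = Real.exp (1/2 * Real.log d * (Real.log (d:ℝ) - Real.log ((d:ℝ)-(k:ℝ)))) := by
    rw [Real.rpow_def_of_pos (Real.sqrt_pos.2 hd0), Real.log_sqrt hd0.le,
      Real.log_div (by positivity) (ne_of_gt hdkpos)]
    ring_nf
  rw [hRHS]
  refine le_trans h1 (Real.exp_le_exp.mpr ?_)
  calc ∑ i ∈ Finset.Icc (d-k) (d-1), 1/(2*(i:ℝ)) * Real.log (((i:ℝ)+5)/4)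
      ≤ _ := h2
    _ = _ := h3
end

section
/- The sequence n ↦ (n·log((n+4)/4))/(n-1), defined for integers n ≥ 2, is increasing. -/
lemma seq_step_ge3 (x : ℝ) (hx : 3 ≤ x) :
    (x * Real.log ((x + 4) / 4)) / (x - 1) ≤
      ((x + 1) * Real.log ((x + 1 + 4) / 4)) / (x + 1 - 1) := by
  have h1 : (0:ℝ) < x - 1 := by linarith
  have h2 : (0:ℝ) < x + 1 - 1 := by linarith
  rw [div_le_div_iff₀ h1 h2]
  have hA : Real.log ((x + 4) / 4) ≤ x / 4 := by
    have := Real.log_le_sub_one_of_pos (show (0:ℝ) < (x + 4) / 4 by linarith)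
    linarith
  have hBA : (1:ℝ) / (x + 5) ≤ Real.log ((x + 1 + 4) / 4) - Real.log ((x + 4) / 4) := by
    have h4 : (0:ℝ) < x + 4 := by linarith
    have h5 : (0:ℝ) < x + 5 := by linarith
    have e1 : Real.log ((x + 4) / 4) - Real.log ((x + 1 + 4) / 4)
        = Real.log ((x + 4) / (x + 5)) := by
      rw [Real.log_div (by positivity) (by norm_num),
        Real.log_div (by positivity) (by norm_num),
        Real.log_div (by positivity) (by positivity)]
      ring_nf
    have e2 := Real.log_le_sub_one_of_pos (show (0:ℝ) < (x + 4) / (x + 5) by positivity)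
    have e3 : (x + 4) / (x + 5) - 1 = - (1 / (x + 5)) := by field_simp; ring
    linarith [e1, e2, e3.le, e3.ge]
  have hkey : x / 4 ≤ (x ^ 2 - 1) * (1 / (x + 5)) := by
    rw [mul_one_div, le_div_iff₀ (by linarith)]
    nlinarith
  nlinarith [mul_le_mul_of_nonneg_left hBA (show (0:ℝ) ≤ x ^ 2 - 1 by nlinarith)]

lemma seq_step (n : ℕ) (hn : 2 ≤ n) :
    ((n : ℝ) * Real.log (((n : ℝ) + 4) / 4)) / ((n : ℝ) - 1) ≤
      (((n + 1 : ℕ) : ℝ) * Real.log ((((n + 1 : ℕ) : ℝ) + 4) / 4)) / (((n + 1 : ℕ) : ℝ) - 1) := by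
  push_cast
  rcases eq_or_lt_of_le hn with h2 | h3
  · -- n = 2
    subst h2
    norm_num
    have e1 : (4:ℝ) * Real.log (3 / 2) = Real.log ((3 / 2 : ℝ) ^ 4) := by
      rw [Real.log_pow]; norm_num
    have e2 : (3:ℝ) * Real.log (7 / 4) = Real.log ((7 / 4 : ℝ) ^ 3) := by
      rw [Real.log_pow]; norm_num
    have e3 : Real.log ((3 / 2 : ℝ) ^ 4) ≤ Real.log ((7 / 4 : ℝ) ^ 3) :=
      Real.log_le_log (by norm_num) (by norm_num)
    linarith
  · have : (3:ℝ) ≤ (n : ℝ) := by exact_mod_cast h3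
    exact seq_step_ge3 _ this

theorem seq_increasing (m n : ℕ) (hm : 2 ≤ m) (hmn : m ≤ n) :
    ((m : ℝ) * Real.log (((m : ℝ) + 4) / 4)) / ((m : ℝ) - 1) ≤
      ((n : ℝ) * Real.log (((n : ℝ) + 4) / 4)) / ((n : ℝ) - 1) := by
  induction n, hmn using Nat.le_induction with
  | base => exact le_refl _
  | succ n hn ih => exact ih.trans (seq_step n (hm.trans hn))
end

section
/- Let (b_1,…,b_d) be an HKZ-reduced basis of a lattice L ⊂ ℝ^n of dimension d ≥ 2, with Gram–Schmidt vectors b_i^*. For I ⊆ {1,…,d} define π_I = (∏_{i∈I} ‖b_i^*‖)^{1/|I|}, and for 1 ≤ k < d define Γ_d(k) = ∏_{i=d-k}^{d-1} γ_{i+1}^{1/(2i)} where γ_n is Hermite's constant. Then for all integers 0 ≤ k ≤ d-1: π_{[1,k]} ≤ (Γ_d(k))^{d/k} · π_{[k+1,d]} (for k ≥ 1). -/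
open Finset

/-- Averaged Schnorr bound, first inequality of Lemma `mschnorr`.
`B i` stands for `‖bᵢ*‖`, the norms of the Gram–Schmidt vectors of an
HKZ-reduced basis; the only property of HKZ-reduction used is the stated
Minkowski-type inequality with Hermite's constants `γ`. -/
theorem pi_first_le (d : ℕ) (hd : 2 ≤ d) (B : ℕ → ℝ)
    (hBpos : ∀ i, 1 ≤ i → i ≤ d → 0 < B i)
    (γ : ℕ → ℝ) (hγ : ∀ n, 1 ≤ γ n)
    (hHKZ : ∀ i, 1 ≤ i → i ≤ d →
      B i ≤ Real.sqrt (γ (d - i + 1)) *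
        (∏ j ∈ Finset.Icc i d, B j) ^ ((1 : ℝ) / ((d : ℝ) - (i : ℝ) + 1)))
    (k : ℕ) (hk1 : 1 ≤ k) (hk : k ≤ d - 1) :
    (∏ i ∈ Finset.Icc 1 k, B i) ^ ((1 : ℝ) / (k : ℝ)) ≤
      (∏ i ∈ Finset.Icc (d - k) (d - 1), γ (i + 1) ^ ((1 : ℝ) / (2 * i))) ^ ((d : ℝ) / (k : ℝ)) *
        (∏ i ∈ Finset.Icc (k + 1) d, B i) ^ ((1 : ℝ) / ((d : ℝ) - (k : ℝ))) := by
  have hγ0 : ∀ n, (0:ℝ) < γ n := fun n => lt_of_lt_of_le one_pos (hγ n)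
  set P : ℕ → ℝ := fun i => ∏ j ∈ Finset.Icc i d, B j with hPdef
  have hPpos : ∀ i, 1 ≤ i → 0 < P i := by
    intro i hi
    exact Finset.prod_pos fun j hj =>
      hBpos j (le_trans hi (Finset.mem_Icc.mp hj).1) (Finset.mem_Icc.mp hj).2
  -- key one-step inequality
  have hstep : ∀ i, 1 ≤ i → i + 1 ≤ d →
      P i ^ ((1:ℝ)/((d:ℝ) - i + 1)) ≤
        γ (d - i + 1) ^ ((1:ℝ)/(2*((d:ℝ) - i))) * P (i+1) ^ ((1:ℝ)/((d:ℝ) - i)) := by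
    intro i hi1 hid
    have hidle : i ≤ d := le_trans (Nat.le_succ i) hid
    have hdi : (0:ℝ) < (d:ℝ) - i := by
      have : (i:ℝ) + 1 ≤ (d:ℝ) := by exact_mod_cast hid
      linarith
    have hmr : (0:ℝ) < (d:ℝ) - i + 1 := by linarith
    set m : ℕ := d - i + 1 with hm
    have hmcast : (m:ℝ) = (d:ℝ) - i + 1 := by
      rw [hm]; push_cast [Nat.cast_sub hidle]; ring
    have hm1cast : ((m - 1 : ℕ):ℝ) = (d:ℝ) - i := by
      have : m - 1 = d - i := by omega
      rw [this]; push_cast [Nat.cast_sub hidle]; ring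
    have hPi := hPpos i hi1
    have hPi1 := hPpos (i+1) (by omega)
    have h1 : B i ≤ Real.sqrt (γ m) * P i ^ ((1:ℝ)/((d:ℝ) - i + 1)) := hHKZ i hi1 hidle
    have hA : B i ^ m ≤ Real.sqrt (γ m) ^ m * P i := by
      have h2 := pow_le_pow_left₀ (hBpos i hi1 hidle).le h1 m
      rw [mul_pow, ← Real.rpow_natCast (P i ^ ((1:ℝ)/((d:ℝ) - i + 1))) m,
        ← Real.rpow_mul hPi.le] at h2
      have hexp : (1:ℝ)/((d:ℝ) - i + 1) * (m:ℝ) = 1 := by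
        rw [hmcast]; field_simp
      rwa [hexp, Real.rpow_one] at h2
    have hsplit : P i = B i * P (i+1) := by
      have hmem : i ∈ Finset.Icc i d := Finset.mem_Icc.mpr ⟨le_refl i, hidle⟩
      simp only [hPdef]
      rw [← Finset.mul_prod_erase _ _ hmem, Finset.Icc_erase_left, ← Finset.Icc_add_one_left_eq_Ioc]
    have hC : P i ^ (m - 1) ≤ Real.sqrt (γ m) ^ m * P (i+1) ^ m := by
      have h' : P i ^ (m-1) * P i ≤ (Real.sqrt (γ m) ^ m * P (i+1) ^ m) * P i := by
        calc P i ^ (m-1) * P i = P i ^ m := by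
              have hm' : m - 1 + 1 = m := by omega
              rw [← pow_succ, hm']
          _ = B i ^ m * P (i+1) ^ m := by rw [hsplit, mul_pow]
          _ ≤ (Real.sqrt (γ m) ^ m * P i) * P (i+1) ^ m :=
              mul_le_mul_of_nonneg_right hA (pow_nonneg hPi1.le m)
          _ = (Real.sqrt (γ m) ^ m * P (i+1) ^ m) * P i := by ring
      exact le_of_mul_le_mul_right h' hPi
    have he : (0:ℝ) ≤ 1/(((d:ℝ)-i+1)*((d:ℝ)-i)) := by positivity
    have hD := Real.rpow_le_rpow (pow_nonneg hPi.le _) hC he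
    have hL : ((P i ^ (m-1)) : ℝ) ^ ((1:ℝ)/(((d:ℝ)-i+1)*((d:ℝ)-i))) =
        P i ^ ((1:ℝ)/((d:ℝ)-i+1)) := by
      rw [← Real.rpow_natCast (P i) (m-1), ← Real.rpow_mul hPi.le]
      congr 1
      rw [hm1cast]
      field_simp
    have hR : ((Real.sqrt (γ m) ^ m * P (i+1) ^ m) : ℝ) ^ ((1:ℝ)/(((d:ℝ)-i+1)*((d:ℝ)-i))) =
        γ (d - i + 1) ^ ((1:ℝ)/(2*((d:ℝ) - i))) * P (i+1) ^ ((1:ℝ)/((d:ℝ) - i)) := by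
      rw [Real.mul_rpow (pow_nonneg (Real.sqrt_nonneg _) m) (pow_nonneg hPi1.le m),
        ← Real.rpow_natCast (Real.sqrt (γ m)) m, ← Real.rpow_natCast (P (i+1)) m,
        ← Real.rpow_mul (Real.sqrt_nonneg _), ← Real.rpow_mul hPi1.le,
        Real.sqrt_eq_rpow, ← Real.rpow_mul (hγ0 m).le, hmcast, ← hm]
      congr 1
      · congr 1
        field_simp
      · congr 1
        field_simp
    rw [hL, hR] at hD
    exact hD
  -- chained inequality
  have hchain : ∀ K, K ≤ d - 1 →
      P 1 ^ ((1:ℝ)/(d:ℝ)) ≤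
        (∏ i ∈ Finset.Icc 1 K, γ (d - i + 1) ^ ((1:ℝ)/(2*((d:ℝ)-i)))) *
          P (K+1) ^ ((1:ℝ)/((d:ℝ)-(K:ℝ))) := by
    intro K
    induction K with
    | zero => intro _; simp
    | succ n ih =>
      intro hK
      have h1 := ih (by omega)
      have h2 := hstep (n+1) (by omega) (by omega)
      have e1 : (d:ℝ) - ((n+1 : ℕ):ℝ) + 1 = (d:ℝ) - (n:ℝ) := by push_cast; ring
      rw [e1] at h2
      have hprodnn : (0:ℝ) ≤ ∏ i ∈ Finset.Icc 1 n, γ (d - i + 1) ^ ((1:ℝ)/(2*((d:ℝ)-i))) :=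
        Finset.prod_nonneg fun i _ => Real.rpow_nonneg (hγ0 _).le _
      calc P 1 ^ ((1:ℝ)/(d:ℝ))
          ≤ (∏ i ∈ Finset.Icc 1 n, γ (d - i + 1) ^ ((1:ℝ)/(2*((d:ℝ)-i)))) *
              P (n+1) ^ ((1:ℝ)/((d:ℝ)-(n:ℝ))) := h1
        _ ≤ (∏ i ∈ Finset.Icc 1 n, γ (d - i + 1) ^ ((1:ℝ)/(2*((d:ℝ)-i)))) *
              (γ (d - (n+1) + 1) ^ ((1:ℝ)/(2*((d:ℝ)-((n+1:ℕ):ℝ)))) *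
                P (n+2) ^ ((1:ℝ)/((d:ℝ)-((n+1:ℕ):ℝ)))) :=
            mul_le_mul_of_nonneg_left h2 hprodnn
        _ = (∏ i ∈ Finset.Icc 1 (n+1), γ (d - i + 1) ^ ((1:ℝ)/(2*((d:ℝ)-i)))) *
              P (n+1+1) ^ ((1:ℝ)/((d:ℝ)-((n+1:ℕ):ℝ))) := by
            rw [Finset.prod_Icc_succ_top (by omega : 1 ≤ n+1)]
            ring
  -- assemble
  have h := hchain k hk
  have hk0 : (0:ℝ) < (k:ℝ) := by exact_mod_cast hk1
  have hkd : (k:ℝ) < (d:ℝ) := by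
    have : k < d := by omega
    exact_mod_cast this
  have hdk : (0:ℝ) < (d:ℝ) - k := by linarith
  have hd0 : (0:ℝ) < (d:ℝ) := by positivity
  have hA0 : (0:ℝ) < ∏ i ∈ Finset.Icc 1 k, B i :=
    Finset.prod_pos fun i hi => hBpos i (Finset.mem_Icc.mp hi).1
      (le_trans (Finset.mem_Icc.mp hi).2 (by omega))
  have hC0 : (0:ℝ) < ∏ i ∈ Finset.Icc (k+1) d, B i :=
    Finset.prod_pos fun i hi => by
      have h' := Finset.mem_Icc.mp hi
      exact hBpos i (by omega) h'.2
  set A := ∏ i ∈ Finset.Icc 1 k, B i with hAdef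
  set C := ∏ i ∈ Finset.Icc (k+1) d, B i with hCdef
  set G := ∏ i ∈ Finset.Icc 1 k, γ (d - i + 1) ^ ((1:ℝ)/(2*((d:ℝ)-(i:ℝ)))) with hGdef
  have hG0 : (0:ℝ) < G :=
    Finset.prod_pos fun i _ => Real.rpow_pos_of_pos (hγ0 _) _
  have hPsplit : P 1 = A * C := by
    have hunion : Finset.Icc 1 k ∪ Finset.Icc (k+1) d = Finset.Icc 1 d := by
      ext x; simp only [Finset.mem_union, Finset.mem_Icc]; omega
    have hdisj : Disjoint (Finset.Icc 1 k) (Finset.Icc (k+1) d) := by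
      rw [Finset.disjoint_left]
      intro a ha hb
      simp only [Finset.mem_Icc] at ha hb
      omega
    simp only [hPdef, hAdef, hCdef]
    rw [← hunion, Finset.prod_union hdisj]
  rw [hPsplit] at h
  have hCk1 : P (k+1) = C := by simp only [hPdef, hCdef]
  rw [hCk1] at h
  -- raise to power d
  have h3 : A * C ≤ G ^ (d:ℝ) * C ^ ((d:ℝ)/((d:ℝ)-k)) := by
    have h' := Real.rpow_le_rpow (Real.rpow_nonneg (by positivity) _) h hd0.le
    rw [← Real.rpow_mul (by positivity : (0:ℝ) ≤ A * C), one_div,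
      inv_mul_cancel₀ hd0.ne', Real.rpow_one,
      Real.mul_rpow hG0.le (Real.rpow_nonneg hC0.le _),
      ← Real.rpow_mul hC0.le, one_div_mul_eq_div] at h'
    exact h'
  have hCsplit : C ^ ((d:ℝ)/((d:ℝ)-k)) = C ^ ((k:ℝ)/((d:ℝ)-k)) * C := by
    have e : (d:ℝ)/((d:ℝ)-k) = (k:ℝ)/((d:ℝ)-k) + 1 := by
      field_simp
      ring
    rw [e, Real.rpow_add hC0, Real.rpow_one]
  have h4 : A ≤ G ^ (d:ℝ) * C ^ ((k:ℝ)/((d:ℝ)-k)) := by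
    have h3' : A * C ≤ (G ^ (d:ℝ) * C ^ ((k:ℝ)/((d:ℝ)-k))) * C := by
      calc A * C ≤ G ^ (d:ℝ) * C ^ ((d:ℝ)/((d:ℝ)-k)) := h3
        _ = _ := by rw [hCsplit]; ring
    exact le_of_mul_le_mul_right h3' hC0
  have h5 := Real.rpow_le_rpow hA0.le h4 (by positivity : (0:ℝ) ≤ 1/(k:ℝ))
  rw [Real.mul_rpow (Real.rpow_nonneg hG0.le _) (Real.rpow_nonneg hC0.le _),
    ← Real.rpow_mul hG0.le, ← Real.rpow_mul hC0.le] at h5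
  have e2 : (d:ℝ) * (1/(k:ℝ)) = (d:ℝ)/(k:ℝ) := by ring
  have e3 : ((k:ℝ)/((d:ℝ)-k)) * (1/(k:ℝ)) = 1/((d:ℝ)-(k:ℝ)) := by
    field_simp
  rw [e2, e3] at h5
  have hGeq : G = ∏ i ∈ Finset.Icc (d-k) (d-1), γ (i+1) ^ ((1:ℝ)/(2*(i:ℝ))) := by
    rw [hGdef]
    refine Finset.prod_nbij' (fun i => d - i) (fun j => d - j) ?_ ?_ ?_ ?_ ?_
    · intro a ha
      simp only [Finset.mem_Icc] at ha ⊢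
      omega
    · intro a ha
      simp only [Finset.mem_Icc] at ha ⊢
      omega
    · intro a ha
      simp only [Finset.mem_Icc] at ha
      omega
    · intro a ha
      simp only [Finset.mem_Icc] at ha
      omega
    · intro a ha
      simp only [Finset.mem_Icc] at ha
      have hcast : ((d - a : ℕ):ℝ) = (d:ℝ) - (a:ℝ) :=
        Nat.cast_sub (by omega)
      rw [hcast]
  rw [hGeq] at h5
  exact h5
end

section
/- Let (b_1,…,b_d) be an HKZ-reduced basis of a lattice L of dimension d ≥ 2. For all integers 0 ≤ k ≤ d-1, π_{[k+1,d]} ≥ (Γ_d(k))^{-1} · (det L)^{1/d} ≥ (√d)^{log((d-k)/d)} · (det L)^{1/d}, where π_I = (∏_{i∈I} ‖b_i^*‖)^{1/|I|} and det L = ∏_{i=1}^d ‖b_i^*‖. -/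
open Finset

private lemma sum_Icc_bot (f : ℕ → ℝ) {a b : ℕ} (h : a ≤ b) :
    ∑ i ∈ Finset.Icc a b, f i = f a + ∑ i ∈ Finset.Icc (a+1) b, f i := by
  rw [Finset.Icc_add_one_left_eq_Ioc, Finset.Icc_eq_cons_Ioc h, Finset.sum_cons]

private lemma telescope (f : ℕ → ℝ) {m n : ℕ} (h : m ≤ n) :
    ∑ i ∈ Finset.Ico m n, (f (i+1) - f i) = f n - f m := by
  induction n, h using Nat.le_induction with
  | base => simp
  | succ n hmn ih =>
      rw [Finset.sum_Ico_succ_top (by omega), ih]; ring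

private lemma log_succ_div (i : ℕ) (hi : 1 ≤ i) :
    1 / ((i:ℝ)+1) ≤ Real.log (((i:ℝ)+1)) - Real.log i := by
  have h0 : (0:ℝ) < i := by exact_mod_cast hi
  have h1 : (0:ℝ) < ((i:ℝ)+1)/i := by positivity
  have h := Real.one_sub_inv_le_log_of_pos h1
  rw [Real.log_div (by positivity) (by positivity)] at h
  have h2 : (((i:ℝ)+1)/i)⁻¹ = (i:ℝ)/((i:ℝ)+1) := by field_simp
  rw [h2] at h
  have h3 : 1 - (i:ℝ)/((i:ℝ)+1) = 1/((i:ℝ)+1) := by field_simp; ring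
  linarith [h, h3.symm.le]

private lemma twelve_sevenths (i : ℕ) (hi : 2 ≤ i) : ((i:ℝ)+1) ≤ (12/7)^(i+1) := by
  induction i, hi using Nat.le_induction with
  | base => norm_num
  | succ i hi ih =>
      have h1 : ((12:ℝ)/7)^(i+1+1) = (12/7) * (12/7)^(i+1) := by ring
      rw [h1]
      push_cast
      have hi2 : (2:ℝ) ≤ i := by exact_mod_cast hi
      nlinarith [ih, hi2, mul_le_mul_of_nonneg_left ih (by norm_num : (0:ℝ) ≤ 12/7)]

private lemma pow_key (i : ℕ) (hi : 2 ≤ i) :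
    (((i:ℝ)+5)/4)^(i+1) ≤ ((i:ℝ)+1)^i := by
  have h0 : (0:ℝ) < (i:ℝ)+5 := by positivity
  have h1 : (0:ℝ) < (i:ℝ)+1 := by positivity
  have hc : (12:ℝ)/7 ≤ 4*((i:ℝ)+1)/((i:ℝ)+5) := by
    rw [le_div_iff₀ h0]
    have : (2:ℝ) ≤ i := by exact_mod_cast hi
    nlinarith
  have h2 : ((i:ℝ)+1) ≤ (4*((i:ℝ)+1)/((i:ℝ)+5))^(i+1) :=
    le_trans (twelve_sevenths i hi) (pow_le_pow_left₀ (by norm_num) hc _)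
  have h3 : (((i:ℝ)+5)/4)^(i+1) * ((i:ℝ)+1) ≤ (((i:ℝ)+5)/4)^(i+1) * (4*((i:ℝ)+1)/((i:ℝ)+5))^(i+1) :=
    mul_le_mul_of_nonneg_left h2 (by positivity)
  rw [← mul_pow] at h3
  have h4 : ((i:ℝ)+5)/4 * (4*((i:ℝ)+1)/((i:ℝ)+5)) = (i:ℝ)+1 := by field_simp
  rw [h4, pow_succ] at h3
  exact le_of_mul_le_mul_right h3 h1

private lemma sqrt32 : Real.sqrt (3/2) ≤ 1.2248 := by
  rw [show (1.2248:ℝ) = Real.sqrt (1.2248^2) from (Real.sqrt_sq (by norm_num)).symm]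
  exact Real.sqrt_le_sqrt (by norm_num)

private lemma log32 : Real.log (3/2) ≤ 0.45 := by
  have h : Real.log (3/2) = Real.log (Real.sqrt (3/2)) * 2 := by
    rw [Real.log_sqrt (by norm_num)]; ring
  have h2 := Real.log_le_sub_one_of_pos (show (0:ℝ) < Real.sqrt (3/2) by positivity)
  nlinarith [sqrt32]

private lemma termB (d : ℕ) (hd : 2 ≤ d) (γ : ℕ → ℝ) (hγ : ∀ n, 1 ≤ γ n)
    (hγ' : ∀ n, 2 ≤ n → γ n ≤ ((n : ℝ) + 4) / 4) (i : ℕ) (hi : 1 ≤ i) (hid : i < d) :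
    Real.log (γ (i+1)) / (2*(i:ℝ)) ≤
      1/2 * Real.log d * (Real.log ((i:ℝ)+1) - Real.log i) := by
  have hγpos : (0:ℝ) < γ (i+1) := lt_of_lt_of_le one_pos (hγ _)
  have hdpos : (0:ℝ) < d := by positivity
  have hlogd : Real.log 2 ≤ Real.log d := by
    apply Real.log_le_log (by norm_num)
    exact_mod_cast hd
  have hlogd0 : (0:ℝ) ≤ Real.log d :=
    le_trans (Real.log_nonneg (by norm_num)) hlogd
  have hsd : Real.log ((i:ℝ)+1) ≤ Real.log d := by
    apply Real.log_le_log (by positivity)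
    exact_mod_cast hid
  have hdiff := log_succ_div i hi
  rcases eq_or_lt_of_le hi with h1 | hi2
  · -- i = 1
    obtain rfl : i = 1 := h1.symm
    have hγle : γ 2 ≤ 3/2 := by
      have := hγ' 2 (le_refl 2)
      norm_num at this
      linarith
    have hlog1 : Real.log (γ 2) ≤ Real.log (3/2) := Real.log_le_log hγpos hγle
    have hl2 := Real.log_two_gt_d9
    norm_num [Real.log_one]
    nlinarith [log32, hlog1, hlogd, hl2]
  · -- i ≥ 2
    have hγle : γ (i+1) ≤ ((i:ℝ)+5)/4 := by
      have := hγ' (i+1) (by omega)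
      push_cast at this ⊢
      linarith
    have hlog1 : Real.log (γ (i+1)) ≤ Real.log (((i:ℝ)+5)/4) :=
      Real.log_le_log hγpos hγle
    have hlog2 : ((i:ℝ)+1) * Real.log (((i:ℝ)+5)/4) ≤ (i:ℝ) * Real.log ((i:ℝ)+1) := by
      have := Real.log_le_log (by positivity) (pow_key i hi2)
      rwa [Real.log_pow, Real.log_pow, Nat.cast_succ] at this
    have hipos : (0:ℝ) < i := by exact_mod_cast hi
    have hb0 : (0:ℝ) ≤ Real.log ((i:ℝ)+1) := Real.log_nonneg (by linarith)
    rw [div_le_iff₀ (by positivity : (0:ℝ) < 2*(i:ℝ))]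
    have he : 1 ≤ ((i:ℝ)+1) * (Real.log ((i:ℝ)+1) - Real.log i) := by
      rw [div_le_iff₀ (by positivity : (0:ℝ) < (i:ℝ)+1)] at hdiff
      linarith [mul_comm (Real.log ((i:ℝ)+1) - Real.log (i:ℝ)) ((i:ℝ)+1)]
    have f1 : Real.log (γ (i+1)) * ((i:ℝ)+1) ≤ Real.log (((i:ℝ)+5)/4) * ((i:ℝ)+1) :=
      mul_le_mul_of_nonneg_right hlog1 (by positivity)
    have f2 : Real.log ((i:ℝ)+1) * (i:ℝ) ≤ Real.log (d:ℝ) * (i:ℝ) :=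
      mul_le_mul_of_nonneg_right hsd hipos.le
    have f3 : Real.log (d:ℝ) * (i:ℝ) ≤
        Real.log (d:ℝ) * (i:ℝ) * (((i:ℝ)+1) * (Real.log ((i:ℝ)+1) - Real.log i)) :=
      le_mul_of_one_le_right (mul_nonneg hlogd0 hipos.le) he
    have h7 : Real.log (γ (i+1)) * ((i:ℝ)+1) ≤
        (1/2 * Real.log (d:ℝ) * (Real.log ((i:ℝ)+1) - Real.log i) * (2*(i:ℝ))) * ((i:ℝ)+1) := by
      linarith [f1, f2, f3, hlog2]
    exact le_of_mul_le_mul_right h7 (by positivity)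

private lemma claimB (d : ℕ) (hd : 2 ≤ d) (γ : ℕ → ℝ) (hγ : ∀ n, 1 ≤ γ n)
    (hγ' : ∀ n, 2 ≤ n → γ n ≤ ((n : ℝ) + 4) / 4) (m : ℕ) (hm : 1 ≤ m) (hmd : m ≤ d) :
    ∑ i ∈ Finset.Icc m (d-1), Real.log (γ (i+1)) / (2*(i:ℝ)) ≤
      1/2 * Real.log d * (Real.log d - Real.log m) := by
  have hIcc : Finset.Icc m (d-1) = Finset.Ico m d := by
    rw [← Finset.Ico_add_one_right_eq_Icc]
    congr 1
    omega
  rw [hIcc]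
  have tele := telescope (fun n => Real.log (n:ℝ)) hmd
  have hR : ∑ i ∈ Finset.Ico m d, (1/2 * Real.log d * (Real.log ((i:ℝ)+1) - Real.log i))
      = 1/2 * Real.log d * (Real.log d - Real.log m) := by
    rw [← Finset.mul_sum]
    congr 1
    rw [← tele]
    apply Finset.sum_congr rfl
    intro x hx
    push_cast
    ring
  rw [← hR]
  apply Finset.sum_le_sum
  intro i hi
  rw [Finset.mem_Ico] at hi
  exact termB d hd γ hγ hγ' i (le_trans hm hi.1) hi.2

private lemma claimA (d : ℕ) (hd : 2 ≤ d) (B : ℕ → ℝ)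
    (hBpos : ∀ i, 1 ≤ i → i ≤ d → 0 < B i)
    (γ : ℕ → ℝ) (hγ : ∀ n, 1 ≤ γ n)
    (hHKZ : ∀ i, 1 ≤ i → i ≤ d →
      B i ≤ Real.sqrt (γ (d - i + 1)) *
        (∏ j ∈ Finset.Icc i d, B j) ^ ((1 : ℝ) / ((d : ℝ) - (i : ℝ) + 1))) :
    ∀ k, k ≤ d - 1 →
    (1/(d:ℝ)) * ∑ i ∈ Finset.Icc 1 d, Real.log (B i) ≤
      (∑ i ∈ Finset.Icc (d-k) (d-1), Real.log (γ (i+1)) / (2*(i:ℝ)))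
        + (1/((d:ℝ)-(k:ℝ))) * ∑ i ∈ Finset.Icc (k+1) d, Real.log (B i) := by
  intro k
  induction k with
  | zero =>
      intro _
      rw [show d - 0 = d from rfl, Finset.Icc_eq_empty (by omega : ¬ d ≤ d - 1)]
      simp
  | succ k ih =>
      intro hk1
      have hk : k ≤ d - 1 := by omega
      have hkd : k + 2 ≤ d := by omega
      specialize ih hk
      -- positivity of tail product
      have hP : (0:ℝ) < ∏ j ∈ Finset.Icc (k+1) d, B j := by
        apply Finset.prod_pos
        intro j hj
        rw [Finset.mem_Icc] at hj
        exact hBpos j (by omega) hj.2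
      have hγpos : (0:ℝ) < γ (d - k) := lt_of_lt_of_le one_pos (hγ _)
      have hHKZ' := hHKZ (k+1) (by omega) (by omega)
      rw [show d - (k+1) + 1 = d - k from by omega,
        show (d:ℝ) - ((k:ℕ)+1 : ℕ) + 1 = (d:ℝ) - (k:ℝ) from by push_cast; ring] at hHKZ'
      have hlog := Real.log_le_log (hBpos (k+1) (by omega) (by omega)) hHKZ'
      rw [Real.log_mul (by positivity) (by positivity), Real.log_sqrt hγpos.le,
        Real.log_rpow hP] at hlog
      have hlogP : Real.log (∏ j ∈ Finset.Icc (k+1) d, B j)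
          = ∑ j ∈ Finset.Icc (k+1) d, Real.log (B j) := by
        apply Real.log_prod
        intro j hj
        rw [Finset.mem_Icc] at hj
        exact ne_of_gt (hBpos j (by omega) hj.2)
      rw [hlogP] at hlog
      have hsplit : ∑ i ∈ Finset.Icc (k+1) d, Real.log (B i)
          = Real.log (B (k+1)) + ∑ i ∈ Finset.Icc (k+2) d, Real.log (B i) :=
        sum_Icc_bot _ (by omega)
      -- split the γ-sum
      have hGsplit : ∑ i ∈ Finset.Icc (d-(k+1)) (d-1), Real.log (γ (i+1)) / (2*(i:ℝ))
          = Real.log (γ (d-k)) / (2*((d:ℝ)-(k:ℝ)-1))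
            + ∑ i ∈ Finset.Icc (d-k) (d-1), Real.log (γ (i+1)) / (2*(i:ℝ)) := by
        rw [sum_Icc_bot (fun i => Real.log (γ (i+1)) / (2*(i:ℝ))) (by omega : d-(k+1) ≤ d-1),
          show d - (k+1) + 1 = d - k from by omega,
          show ((d - (k+1) : ℕ) : ℝ) = (d:ℝ)-(k:ℝ)-1 from by
            rw [Nat.cast_sub (by omega : k+1 ≤ d)]; push_cast; ring]
      set S := ∑ i ∈ Finset.Icc (k+1) d, Real.log (B i) with hS
      set T := ∑ i ∈ Finset.Icc (k+2) d, Real.log (B i) with hT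
      set g := Real.log (γ (d-k)) with hg
      set n := (d:ℝ) - (k:ℝ) with hn
      have hn2 : (2:ℝ) ≤ n := by
        rw [hn]
        have : ((k:ℝ)+2) ≤ (d:ℝ) := by exact_mod_cast hkd
        linarith
      have hn1 : (0:ℝ) < n - 1 := by linarith
      have hn0 : (0:ℝ) < n := by linarith
      have key : (1/n) * S ≤ g/(2*(n-1)) + (1/(n-1)) * T := by
        rw [← mul_le_mul_iff_right₀ hn1]
        have e1 : (n-1)*(g/(2*(n-1)) + (1/(n-1))*T) = g/2 + T := by
          field_simp
        have e2 : (n-1)*((1/n)*S) = S - (1/n)*S := by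
          field_simp
        rw [e1, e2]
        linarith [hlog, hsplit]
      rw [hGsplit, show (d:ℝ) - ((k:ℕ)+1 : ℕ) = n - 1 from by push_cast; ring]
      linarith [ih, key]

/-- Second inequality of the averaged Schnorr lemma. `B i = ‖bᵢ*‖` for an
HKZ-reduced basis, `det L = ∏ i ∈ [1,d], B i`, and `γ` are Hermite's constants,
of which we only use `1 ≤ γ n ≤ (n+4)/4` and the Minkowski-type inequality. -/
theorem pi_tail_ge (d : ℕ) (hd : 2 ≤ d) (B : ℕ → ℝ)
    (hBpos : ∀ i, 1 ≤ i → i ≤ d → 0 < B i)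
    (γ : ℕ → ℝ) (hγ : ∀ n, 1 ≤ γ n) (hγ' : ∀ n, 2 ≤ n → γ n ≤ ((n : ℝ) + 4) / 4)
    (hHKZ : ∀ i, 1 ≤ i → i ≤ d →
      B i ≤ Real.sqrt (γ (d - i + 1)) *
        (∏ j ∈ Finset.Icc i d, B j) ^ ((1 : ℝ) / ((d : ℝ) - (i : ℝ) + 1)))
    (k : ℕ) (hk : k ≤ d - 1) :
    (∏ i ∈ Finset.Icc (k + 1) d, B i) ^ ((1 : ℝ) / ((d : ℝ) - (k : ℝ))) ≥
        (∏ i ∈ Finset.Icc (d - k) (d - 1), γ (i + 1) ^ ((1 : ℝ) / (2 * i)))⁻¹ *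
          (∏ i ∈ Finset.Icc 1 d, B i) ^ ((1 : ℝ) / (d : ℝ)) ∧
      (∏ i ∈ Finset.Icc (d - k) (d - 1), γ (i + 1) ^ ((1 : ℝ) / (2 * i)))⁻¹ *
          (∏ i ∈ Finset.Icc 1 d, B i) ^ ((1 : ℝ) / (d : ℝ)) ≥
        Real.sqrt d ^ Real.log (((d : ℝ) - (k : ℝ)) / (d : ℝ)) *
          (∏ i ∈ Finset.Icc 1 d, B i) ^ ((1 : ℝ) / (d : ℝ)) := by
  have hk' : k ≤ d := by omega
  have hdet : (0:ℝ) < ∏ i ∈ Finset.Icc 1 d, B i := by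
    apply Finset.prod_pos
    intro i hi
    rw [Finset.mem_Icc] at hi
    exact hBpos i hi.1 hi.2
  have hPk : (0:ℝ) < ∏ i ∈ Finset.Icc (k+1) d, B i := by
    apply Finset.prod_pos
    intro i hi
    rw [Finset.mem_Icc] at hi
    exact hBpos i (by omega) hi.2
  have hΓ : (0:ℝ) < ∏ i ∈ Finset.Icc (d-k) (d-1), γ (i+1) ^ ((1:ℝ)/(2*(i:ℝ))) := by
    apply Finset.prod_pos
    intro i _
    exact Real.rpow_pos_of_pos (lt_of_lt_of_le one_pos (hγ _)) _
  have hD : (0:ℝ) < (∏ i ∈ Finset.Icc 1 d, B i) ^ ((1:ℝ)/(d:ℝ)) :=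
    Real.rpow_pos_of_pos hdet _
  have hnk : (0:ℝ) < (d:ℝ) - (k:ℝ) := by
    have : (k:ℝ) + 1 ≤ (d:ℝ) := by exact_mod_cast (by omega : k + 1 ≤ d)
    linarith
  have hdpos : (0:ℝ) < (d:ℝ) := by positivity
  have hlogΓ : Real.log (∏ i ∈ Finset.Icc (d-k) (d-1), γ (i+1) ^ ((1:ℝ)/(2*(i:ℝ))))
      = ∑ i ∈ Finset.Icc (d-k) (d-1), Real.log (γ (i+1)) / (2*(i:ℝ)) := by
    rw [Real.log_prod]
    · apply Finset.sum_congr rfl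
      intro i _
      rw [Real.log_rpow (lt_of_lt_of_le one_pos (hγ _))]
      ring
    · intro i _
      exact ne_of_gt (Real.rpow_pos_of_pos (lt_of_lt_of_le one_pos (hγ _)) _)
  have hlogdet : Real.log (∏ i ∈ Finset.Icc 1 d, B i)
      = ∑ i ∈ Finset.Icc 1 d, Real.log (B i) := by
    apply Real.log_prod
    intro i hi
    rw [Finset.mem_Icc] at hi
    exact ne_of_gt (hBpos i hi.1 hi.2)
  have hlogPk : Real.log (∏ i ∈ Finset.Icc (k+1) d, B i)
      = ∑ i ∈ Finset.Icc (k+1) d, Real.log (B i) := by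
    apply Real.log_prod
    intro i hi
    rw [Finset.mem_Icc] at hi
    exact ne_of_gt (hBpos i (by omega) hi.2)
  constructor
  · rw [ge_iff_le, ← Real.log_le_log_iff (by positivity) (by positivity),
      Real.log_mul (by positivity) (by positivity), Real.log_inv,
      Real.log_rpow hdet, Real.log_rpow hPk, hlogΓ, hlogdet, hlogPk]
    have hA := claimA d hd B hBpos γ hγ hHKZ k hk
    linarith [hA]
  · rw [ge_iff_le]
    apply mul_le_mul_of_nonneg_right _ hD.le
    rw [← Real.log_le_log_iff (Real.rpow_pos_of_pos (Real.sqrt_pos.mpr hdpos) _) (inv_pos.mpr hΓ),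
      Real.log_rpow (Real.sqrt_pos.mpr hdpos), Real.log_inv, hlogΓ,
      Real.log_sqrt hdpos.le, Real.log_div (ne_of_gt hnk) (ne_of_gt hdpos)]
    have hB := claimB d hd γ hγ hγ' (d-k) (by omega) (by omega)
    have hcast : Real.log (((d-k : ℕ) : ℝ)) = Real.log ((d:ℝ)-(k:ℝ)) := by
      rw [Nat.cast_sub hk']
    rw [hcast] at hB
    nlinarith [hB]
end

section
/- Let d ≥ 2 be an integer and let 1 ≤ x_1 < x_2 < d be reals with ⌊x_1⌋ < ⌊x_2⌋. Set λ_i = (d - ⌊x_i⌋ + 1)(1 - x_i + ⌊x_i⌋)/(d - x_i + 1) for i = 1,2, and suppose λ_1 ≤ λ_2. Then E(x_1,x_2) := λ_1·(d-⌊x_1⌋+1)/(d-⌊x_2⌋+1) + (λ_2-λ_1)·(d-⌊x_1⌋)/(d-⌊x_2⌋+1) + (1-λ_2)·(d-⌊x_1⌋)/(d-⌊x_2⌋) ≤ (d - x_1)/(d - x_2). -/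
lemma aux_E_le (A B f g : ℝ) (hB : 1 ≤ B) (hAB : B + 1 ≤ A)
    (hf0 : 0 ≤ f) (hf1 : f < 1) (hg0 : 0 ≤ g) (hg1 : g < 1) :
    ((A+1)*(1-f)/(A+1-f)) * ((A+1)/(B+1))
      + ((B+1)*(1-g)/(B+1-g) - (A+1)*(1-f)/(A+1-f)) * (A/(B+1))
      + (1 - (B+1)*(1-g)/(B+1-g)) * (A/B)
    ≤ (A - f)/(B - g) := by
  have hA1 : (0:ℝ) < A + 1 - f := by linarith
  have hB1 : (0:ℝ) < B + 1 - g := by linarith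
  have hBg : (0:ℝ) < B - g := by linarith
  have hB0 : (0:ℝ) < B := by linarith
  have hBp : (0:ℝ) < B + 1 := by linarith
  have step1 : ((A+1)*(1-f)/(A+1-f)) * ((A+1)/(B+1))
      + ((B+1)*(1-g)/(B+1-g) - (A+1)*(1-f)/(A+1-f)) * (A/(B+1))
      + (1 - (B+1)*(1-g)/(B+1-g)) * (A/B)
      = (A+1)*(1-f)/((A+1-f)*(B+1)) + A/(B+1-g) := by
    field_simp
    ring
  rw [step1]
  rw [div_add_div _ _ (by positivity) (ne_of_gt hB1),
    div_le_div_iff₀ (by positivity) hBg]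
  have h1 : 0 ≤ (A+1-f)*(B+1)*(A-B-1) :=
    mul_nonneg (mul_nonneg hA1.le hBp.le) (by linarith)
  have h2 : 0 ≤ (A+1-f)*(B+1)*f*g :=
    mul_nonneg (mul_nonneg (mul_nonneg hA1.le hBp.le) hf0) hg0
  have h3 : 0 ≤ (1-f)*(B+1)*(A+1-f*(B+1)) := by
    have hfb : f*(B+1) ≤ 1*(B+1) :=
      mul_le_mul_of_nonneg_right (le_of_lt hf1) (le_of_lt hBp)
    exact mul_nonneg (mul_nonneg (by linarith) hBp.le) (by linarith)
  have h4 : 0 ≤ (1-f)*(A+1)*g*(2*B+1-g) :=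
    mul_nonneg (mul_nonneg (mul_nonneg (by linarith) (by linarith)) hg0) (by linarith)
  nlinarith [h1, h2, h3, h4]

theorem E_le_ratio (d : ℕ) (hd : 2 ≤ d) (x₁ x₂ : ℝ)
    (h1 : 1 ≤ x₁) (h12 : x₁ < x₂) (h2 : x₂ < d) (hfl : ⌊x₁⌋ < ⌊x₂⌋)
    (l₁ l₂ : ℝ)
    (hl₁ : l₁ = ((d : ℝ) - (⌊x₁⌋ : ℝ) + 1) * (1 - x₁ + (⌊x₁⌋ : ℝ)) / ((d : ℝ) - x₁ + 1))
    (hl₂ : l₂ = ((d : ℝ) - (⌊x₂⌋ : ℝ) + 1) * (1 - x₂ + (⌊x₂⌋ : ℝ)) / ((d : ℝ) - x₂ + 1))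
    (hle : l₁ ≤ l₂) :
    l₁ * (((d : ℝ) - (⌊x₁⌋ : ℝ) + 1) / ((d : ℝ) - (⌊x₂⌋ : ℝ) + 1)) +
      (l₂ - l₁) * (((d : ℝ) - (⌊x₁⌋ : ℝ)) / ((d : ℝ) - (⌊x₂⌋ : ℝ) + 1)) +
      (1 - l₂) * (((d : ℝ) - (⌊x₁⌋ : ℝ)) / ((d : ℝ) - (⌊x₂⌋ : ℝ))) ≤
    ((d : ℝ) - x₁) / ((d : ℝ) - x₂) := by
  have hfx1 : (⌊x₁⌋:ℝ) ≤ x₁ := Int.floor_le x₁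
  have hfx1' : x₁ < (⌊x₁⌋:ℝ) + 1 := Int.lt_floor_add_one x₁
  have hfx2 : (⌊x₂⌋:ℝ) ≤ x₂ := Int.floor_le x₂
  have hfx2' : x₂ < (⌊x₂⌋:ℝ) + 1 := Int.lt_floor_add_one x₂
  have hbZ : ⌊x₂⌋ < (d:ℤ) := Int.floor_lt.mpr (by exact_mod_cast h2)
  have hbR : (⌊x₂⌋:ℝ) ≤ (d:ℝ) - 1 := by
    have : (⌊x₂⌋:ℝ) + 1 ≤ (d:ℤ) := by exact_mod_cast hbZ
    push_cast at this ⊢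
    linarith
  have haR : (⌊x₁⌋:ℝ) + 1 ≤ (⌊x₂⌋:ℝ) := by exact_mod_cast hfl
  have hB : (1:ℝ) ≤ (d:ℝ) - (⌊x₂⌋:ℝ) := by linarith
  have hAB : ((d:ℝ) - (⌊x₂⌋:ℝ)) + 1 ≤ (d:ℝ) - (⌊x₁⌋:ℝ) := by linarith
  have key := aux_E_le ((d:ℝ) - (⌊x₁⌋:ℝ)) ((d:ℝ) - (⌊x₂⌋:ℝ))
    (x₁ - (⌊x₁⌋:ℝ)) (x₂ - (⌊x₂⌋:ℝ)) hB hAB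
    (by linarith) (by linarith) (by linarith) (by linarith)
  refine le_trans (le_of_eq ?_) (key.trans (le_of_eq ?_))
  · rw [hl₁, hl₂]; ring_nf
  · ring_nf
end

section
/- Let (b_1,…,b_d) be an HKZ-reduced basis of a lattice of dimension d ≥ 2. For a real a and integer b with 1 ≤ a < b ≤ d, define tilde-π_{[a,b]} = (‖b_{⌊a⌋}^*‖^{1-a+⌊a⌋} · ∏_{i=⌊a⌋+1}^{b} ‖b_i^*‖)^{1/(b+1-a)}. Then for reals 1 ≤ x_1 < x_2 < d: tilde-π_{[x_2,d]} ≥ (√d)^{log((d-x_2)/(d-x_1))} · tilde-π_{[x_1,d]}. -/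
open Finset

set_option linter.unusedSectionVars false
set_option linter.unusedVariables false

lemma key_step (d : ℕ) (k : ℕ) (hk1 : 1 ≤ k) (hkd : k ≤ d) (hd : 2 ≤ d)
    (m S : ℝ)
    (hm : ((d:ℝ) - k) * m - S ≤ ((d:ℝ) - k + 1) * (Real.log (((d:ℝ) - (k:ℝ) + 5)/4) / 2))
    (x y : ℝ) (hkx : (k:ℝ) ≤ x) (hxy : x ≤ y) (hyk : y ≤ (k:ℝ) + 1) (hyd : y < d) :
    ((1 - y + (k:ℝ)) * m + S) / ((d:ℝ) + 1 - y) - ((1 - x + (k:ℝ)) * m + S) / ((d:ℝ) + 1 - x)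
      ≥ (Real.log d / 2) * (Real.log ((d:ℝ) - y) - Real.log ((d:ℝ) - x)) := by
  set L : ℝ := Real.log d / 2 with hL
  set c : ℝ := Real.log (((d:ℝ) - (k:ℝ) + 5)/4) / 2 with hc
  have hdpos : (0:ℝ) < d := by positivity
  have hL0 : 0 ≤ L := by
    have : (1:ℝ) ≤ d := by exact_mod_cast Nat.one_le_of_lt hd
    have := Real.log_nonneg this
    simp [hL]; linarith
  have hc0 : 0 ≤ c := by
    have : (1:ℝ) ≤ ((d:ℝ) - (k:ℝ) + 5)/4 := by
      have : (k:ℝ) ≤ d := by exact_mod_cast hkd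
      linarith
    have := Real.log_nonneg this
    simp [hc]; linarith
  have hcL : c ≤ L := by
    have h1 : ((d:ℝ) - (k:ℝ) + 5)/4 ≤ d := by
      have hk : (1:ℝ) ≤ (k:ℝ) := by exact_mod_cast hk1
      have hd2 : (2:ℝ) ≤ (d:ℝ) := by exact_mod_cast hd
      linarith
    have h2 : (0:ℝ) < ((d:ℝ) - (k:ℝ) + 5)/4 := by
      have : (k:ℝ) ≤ d := by exact_mod_cast hkd
      linarith
    have := Real.log_le_log h2 h1
    simp only [hc, hL]; linarith
  set F : ℝ → ℝ := fun a => ((1 - a + (k:ℝ)) * m + S) / ((d:ℝ) + 1 - a) - L * Real.log ((d:ℝ) - a)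
    with hF
  have hder : ∀ a : ℝ, a < d →
      HasDerivAt F ((S - ((d:ℝ) - k) * m) / ((d:ℝ) + 1 - a)^2 + L / ((d:ℝ) - a)) a := by
    intro a ha
    have hden : (d:ℝ) + 1 - a ≠ 0 := by linarith
    have hda : (d:ℝ) - a ≠ 0 := by linarith
    have h1 : HasDerivAt (fun a : ℝ => (1 - a + (k:ℝ)) * m + S) (-m) a := by
      have : HasDerivAt (fun a : ℝ => (1 - a + (k:ℝ))) (-1) a := by
        exact ((hasDerivAt_id' a).const_sub 1).add_const (k:ℝ)
      simpa using (this.mul_const m).add_const S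
    have h2 : HasDerivAt (fun a : ℝ => (d:ℝ) + 1 - a) (-1) a := by
      exact (hasDerivAt_id' a).const_sub ((d:ℝ)+1)
    have hq := h1.div h2 hden
    have h3 : HasDerivAt (fun a : ℝ => (d:ℝ) - a) (-1) a := by
      exact (hasDerivAt_id' a).const_sub (d:ℝ)
    have hlog := (h3.log hda)
    have := (hq.sub ((hlog.const_mul L)))
    exact this.congr_deriv (by ring)
  have hmono : MonotoneOn F (Set.Icc x y) := by
    apply monotoneOn_of_hasDerivWithinAt_nonneg (convex_Icc x y)
    · intro a ha
      have : a < (d:ℝ) := lt_of_le_of_lt ha.2 hyd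
      exact (hder a this).continuousAt.continuousWithinAt
    · intro a ha
      rw [interior_Icc] at ha
      have : a < (d:ℝ) := lt_of_lt_of_le ha.2 (le_of_lt hyd)
      exact (hder a this).hasDerivWithinAt
    · intro a ha
      rw [interior_Icc] at ha
      have hax : x < a := ha.1
      have hay : a < y := ha.2
      have had : a < (d:ℝ) := lt_of_lt_of_le hay (le_of_lt hyd)
      have hka : (k:ℝ) ≤ a := le_trans hkx (le_of_lt hax)
      have hak : a ≤ (k:ℝ) + 1 := le_trans (le_of_lt hay) hyk
      have hu : (0:ℝ) < (d:ℝ) - a := by linarith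
      have hv : (0:ℝ) < (d:ℝ) + 1 - a := by linarith
      -- need 0 ≤ (S - (d-k)m)/(d+1-a)^2 + L/(d-a)
      have key1 : ((d:ℝ) - k + 1) * ((d:ℝ) - a) ≤ ((d:ℝ) + 1 - a)^2 := by nlinarith
      have key2 : (((d:ℝ) - k) * m - S) * ((d:ℝ) - a) ≤ L * ((d:ℝ) + 1 - a)^2 := by
        have h1 : (((d:ℝ) - k) * m - S) * ((d:ℝ) - a) ≤ (((d:ℝ) - k + 1) * c) * ((d:ℝ) - a) :=
          mul_le_mul_of_nonneg_right hm (le_of_lt hu)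
        have h2 : (((d:ℝ) - k + 1) * c) * ((d:ℝ) - a) = c * (((d:ℝ) - k + 1) * ((d:ℝ) - a)) := by
          ring
        have hdk1 : (0:ℝ) ≤ ((d:ℝ) - k + 1) * ((d:ℝ) - a) := by
          have : (k:ℝ) ≤ d := by exact_mod_cast hkd
          nlinarith
        have h3 : c * (((d:ℝ) - k + 1) * ((d:ℝ) - a)) ≤ L * ((d:ℝ) + 1 - a)^2 :=
          mul_le_mul hcL key1 hdk1 hL0
        linarith
      rw [div_add_div _ _ (by positivity) (ne_of_gt hu), le_div_iff₀ (by positivity)]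
      nlinarith
  have hxm : x ∈ Set.Icc x y := Set.left_mem_Icc.2 hxy
  have hym : y ∈ Set.Icc x y := Set.right_mem_Icc.2 hxy
  have := hmono hxm hym hxy
  simp only [hF] at this
  linarith

section glue
variable (d : ℕ) (B : ℕ → ℝ)

/-- log of π̃ -/
noncomputable def glog (a : ℝ) : ℝ :=
  ((1 - a + (⌊a⌋₊:ℝ)) * Real.log (B ⌊a⌋₊) + ∑ i ∈ Finset.Icc (⌊a⌋₊ + 1) d, Real.log (B i))
    / ((d:ℝ) + 1 - a)

variable (hd : 2 ≤ d) (hBpos : ∀ i, 1 ≤ i → i ≤ d → 0 < B i)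
    (hHKZ : ∀ i, 1 ≤ i → i ≤ d →
      B i ≤ Real.sqrt (((d : ℝ) - (i : ℝ) + 5) / 4) *
        (∏ j ∈ Finset.Icc i d, B j) ^ ((1 : ℝ) / ((d : ℝ) - (i : ℝ) + 1)))

include hd hBpos hHKZ

/-- HKZ inequality in log form, ready for key_step. -/
lemma hkz_log (k : ℕ) (hk1 : 1 ≤ k) (hkd : k ≤ d) :
    ((d:ℝ) - k) * Real.log (B k) - (∑ i ∈ Finset.Icc (k + 1) d, Real.log (B i))
      ≤ ((d:ℝ) - k + 1) * (Real.log (((d:ℝ) - (k:ℝ) + 5)/4) / 2) := by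
  have hkd' : (k:ℝ) ≤ d := by exact_mod_cast hkd
  have hBk : 0 < B k := hBpos k hk1 hkd
  have hprodpos : 0 < ∏ j ∈ Finset.Icc k d, B j := by
    apply Finset.prod_pos
    intro i hi
    rw [Finset.mem_Icc] at hi
    exact hBpos i (le_trans hk1 hi.1) hi.2
  have hratio : (0:ℝ) < ((d:ℝ) - (k:ℝ) + 5)/4 := by linarith
  have h := hHKZ k hk1 hkd
  have hrpos : 0 < (∏ j ∈ Finset.Icc k d, B j) ^ ((1 : ℝ) / ((d : ℝ) - (k : ℝ) + 1)) :=
    Real.rpow_pos_of_pos hprodpos _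
  have hlog := Real.log_le_log hBk h
  rw [Real.log_mul (by positivity) (ne_of_gt hrpos), Real.log_rpow hprodpos,
    Real.log_sqrt (le_of_lt hratio)] at hlog
  have hsplit : Real.log (∏ j ∈ Finset.Icc k d, B j)
      = Real.log (B k) + ∑ i ∈ Finset.Icc (k + 1) d, Real.log (B i) := by
    rw [Finset.Icc_eq_cons_Ioc hkd, Finset.prod_cons, ← Finset.Icc_add_one_left_eq_Ioc]
    rw [Real.log_mul (ne_of_gt hBk)]
    · congr 1
      rw [Real.log_prod]
      intro i hi
      rw [Finset.mem_Icc] at hi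
      exact ne_of_gt (hBpos i (le_trans hk1 (le_trans (Nat.le_succ k) hi.1)) hi.2)
    · apply ne_of_gt; apply Finset.prod_pos
      intro i hi
      rw [Finset.mem_Icc] at hi
      exact hBpos i (le_trans hk1 (le_trans (Nat.le_succ k) hi.1)) hi.2
  rw [hsplit] at hlog
  have he : (0:ℝ) < (d:ℝ) - (k:ℝ) + 1 := by linarith
  set m := Real.log (B k)
  set S := ∑ i ∈ Finset.Icc (k + 1) d, Real.log (B i)
  have := mul_le_mul_of_nonneg_left hlog (le_of_lt he)
  rw [mul_add, mul_comm ((d:ℝ) - (k:ℝ) + 1) ((1 : ℝ) / ((d : ℝ) - (k : ℝ) + 1) * (m + S))] at this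
  have h2 : (1 : ℝ) / ((d : ℝ) - (k : ℝ) + 1) * (m + S) * ((d:ℝ) - (k:ℝ) + 1) = m + S := by
    field_simp
  rw [h2] at this
  nlinarith

/-- single step with floor of x -/
lemma step1 (x y : ℝ) (h1 : 1 ≤ x) (hxy : x ≤ y) (hyk : y ≤ (⌊x⌋₊:ℝ) + 1) (hyd : y < d) :
    ((1 - y + (⌊x⌋₊:ℝ)) * Real.log (B ⌊x⌋₊) + ∑ i ∈ Finset.Icc (⌊x⌋₊ + 1) d, Real.log (B i))
        / ((d:ℝ) + 1 - y) - glog d B x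
      ≥ (Real.log d / 2) * (Real.log ((d:ℝ) - y) - Real.log ((d:ℝ) - x)) := by
  set k := ⌊x⌋₊ with hk
  have hk1 : 1 ≤ k := Nat.le_floor (by exact_mod_cast h1)
  have hkx : (k:ℝ) ≤ x := Nat.floor_le (by linarith)
  have hkd : k ≤ d := by
    have : (k:ℝ) < d := lt_of_le_of_lt (le_trans hkx hxy) hyd
    exact_mod_cast le_of_lt this
  exact key_step d k hk1 hkd hd _ _ (hkz_log d B hd hBpos hHKZ k hk1 hkd) x y hkx hxy hyk hyd

/-- glog at an integer point z = k+1 matches the (k)-expression -/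
lemma glue_int (k : ℕ) (hk1 : 1 ≤ k) (hkd : k + 1 ≤ d) :
    glog d B ((k:ℝ) + 1)
      = ((1 - ((k:ℝ)+1) + (k:ℝ)) * Real.log (B k) + ∑ i ∈ Finset.Icc (k + 1) d, Real.log (B i))
          / ((d:ℝ) + 1 - ((k:ℝ)+1)) := by
  have hfl : ⌊(k:ℝ) + 1⌋₊ = k + 1 := by
    rw [show ((k:ℝ) + 1) = ((k+1 : ℕ) : ℝ) by push_cast; ring, Nat.floor_natCast]
  rw [glog, hfl]
  congr 1
  push_cast
  have hsplit : ∑ i ∈ Finset.Icc (k + 1) d, Real.log (B i)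
      = Real.log (B (k+1)) + ∑ i ∈ Finset.Icc (k + 2) d, Real.log (B i) := by
    rw [Finset.Icc_eq_cons_Ioc hkd, Finset.sum_cons, ← Finset.Icc_add_one_left_eq_Ioc]
    rfl
  rw [hsplit]
  ring

/-- the main monotonicity claim in log form -/
lemma claim : ∀ n : ℕ, ∀ x y : ℝ, ⌊y⌋₊ - ⌊x⌋₊ = n → 1 ≤ x → x ≤ y → y < d →
    glog d B y - glog d B x
      ≥ (Real.log d / 2) * (Real.log ((d:ℝ) - y) - Real.log ((d:ℝ) - x)) := by
  intro n
  induction n with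
  | zero =>
    intro x y hn h1 hxy hyd
    have hfle : ⌊x⌋₊ ≤ ⌊y⌋₊ := Nat.floor_le_floor hxy
    have hfeq : ⌊y⌋₊ = ⌊x⌋₊ := by omega
    have hyk : y ≤ (⌊x⌋₊:ℝ) + 1 := by
      rw [← hfeq]
      exact le_of_lt (Nat.lt_floor_add_one y)
    have := step1 d B hd hBpos hHKZ x y h1 hxy hyk hyd
    rw [show glog d B y = ((1 - y + (⌊x⌋₊:ℝ)) * Real.log (B ⌊x⌋₊)
        + ∑ i ∈ Finset.Icc (⌊x⌋₊ + 1) d, Real.log (B i)) / ((d:ℝ) + 1 - y) by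
      rw [glog, hfeq]]
    exact this
  | succ n ih =>
    intro x y hn h1 hxy hyd
    set k := ⌊x⌋₊ with hk
    have hk1 : 1 ≤ k := Nat.le_floor (by exact_mod_cast h1)
    have hfy : k + 1 ≤ ⌊y⌋₊ := by omega
    set z : ℝ := (k:ℝ) + 1 with hz
    have hzy : z ≤ y := by
      calc z = ((k+1 : ℕ):ℝ) := by push_cast; ring
        _ ≤ (⌊y⌋₊ : ℝ) := by exact_mod_cast hfy
        _ ≤ y := Nat.floor_le (by linarith)
    have hzd : z < d := lt_of_le_of_lt hzy hyd
    have hxz : x ≤ z := le_of_lt (Nat.lt_floor_add_one x)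
    have hz1 : 1 ≤ z := by
      have : (1:ℝ) ≤ (k:ℝ) := by exact_mod_cast hk1
      linarith
    have hflz : ⌊z⌋₊ = k + 1 := by
      rw [hz, show ((k:ℝ) + 1) = ((k+1 : ℕ) : ℝ) by push_cast; ring, Nat.floor_natCast]
    have hkd1 : k + 1 ≤ d := by
      have : (k:ℝ) + 1 < d := hzd
      have : ((k+1:ℕ):ℝ) < (d:ℝ) := by push_cast; linarith
      exact_mod_cast le_of_lt this
    have h1' := ih z y (by omega) hz1 hzy hyd
    have h2' := step1 d B hd hBpos hHKZ x z h1 hxz (le_refl _) hzd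
    rw [← glue_int d B hd hBpos hHKZ k hk1 hkd1] at h2'
    linarith
end glue

/-- The real-parameter extension of the averaged Schnorr bound:
`π̃_{[x₂,d]} ≥ (√d)^(log((d-x₂)/(d-x₁))) · π̃_{[x₁,d]}`, where
`π̃_{[a,d]} = (B ⌊a⌋ ^ (1-a+⌊a⌋) · ∏_{i=⌊a⌋+1}^d B i)^(1/(d+1-a))` and
`B i = ‖bᵢ*‖` for an HKZ-reduced basis, of which we only use the stated
Minkowski-type inequality. -/
theorem pitilde_mono (d : ℕ) (hd : 2 ≤ d) (B : ℕ → ℝ)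
    (hBpos : ∀ i, 1 ≤ i → i ≤ d → 0 < B i)
    (hHKZ : ∀ i, 1 ≤ i → i ≤ d →
      B i ≤ Real.sqrt (((d : ℝ) - (i : ℝ) + 5) / 4) *
        (∏ j ∈ Finset.Icc i d, B j) ^ ((1 : ℝ) / ((d : ℝ) - (i : ℝ) + 1)))
    (x₁ x₂ : ℝ) (h1 : 1 ≤ x₁) (h12 : x₁ < x₂) (h2 : x₂ < d) :
    (B ⌊x₂⌋₊ ^ (1 - x₂ + (⌊x₂⌋₊ : ℝ)) * ∏ i ∈ Finset.Icc (⌊x₂⌋₊ + 1) d, B i) ^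
        ((1 : ℝ) / ((d : ℝ) + 1 - x₂)) ≥
      Real.sqrt d ^ Real.log (((d : ℝ) - x₂) / ((d : ℝ) - x₁)) *
        (B ⌊x₁⌋₊ ^ (1 - x₁ + (⌊x₁⌋₊ : ℝ)) * ∏ i ∈ Finset.Icc (⌊x₁⌋₊ + 1) d, B i) ^
          ((1 : ℝ) / ((d : ℝ) + 1 - x₁)) := by
  have hd1 : (1:ℝ) ≤ x₂ := le_of_lt (lt_of_le_of_lt h1 h12)
  -- positivity facts
  have hBx : ∀ x : ℝ, 1 ≤ x → x < d → 0 < B ⌊x⌋₊ := by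
    intro x hx hxd
    apply hBpos
    · exact Nat.le_floor (by exact_mod_cast hx)
    · have : (⌊x⌋₊:ℝ) ≤ x := Nat.floor_le (by linarith)
      have : (⌊x⌋₊:ℝ) < d := lt_of_le_of_lt this hxd
      exact_mod_cast le_of_lt this
  have hprod : ∀ x : ℝ, 1 ≤ x → 0 < ∏ i ∈ Finset.Icc (⌊x⌋₊ + 1) d, B i := by
    intro x hx
    apply Finset.prod_pos
    intro i hi
    rw [Finset.mem_Icc] at hi
    have hk1 : 1 ≤ ⌊x⌋₊ := Nat.le_floor (by exact_mod_cast hx)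
    exact hBpos i (by omega) hi.2
  have hA : ∀ x : ℝ, 1 ≤ x → x < d →
      0 < B ⌊x⌋₊ ^ (1 - x + (⌊x⌋₊ : ℝ)) * ∏ i ∈ Finset.Icc (⌊x⌋₊ + 1) d, B i := by
    intro x hx hxd
    exact mul_pos (Real.rpow_pos_of_pos (hBx x hx hxd) _) (hprod x hx)
  have hA1 := hA x₁ h1 (lt_trans h12 h2)
  have hA2 := hA x₂ hd1 h2
  have hLHSpos : 0 < (B ⌊x₂⌋₊ ^ (1 - x₂ + (⌊x₂⌋₊ : ℝ)) * ∏ i ∈ Finset.Icc (⌊x₂⌋₊ + 1) d, B i) ^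
      ((1 : ℝ) / ((d : ℝ) + 1 - x₂)) := Real.rpow_pos_of_pos hA2 _
  have hsq : (0:ℝ) < Real.sqrt d := Real.sqrt_pos.2 (by positivity)
  have hRHSpos : 0 < Real.sqrt d ^ Real.log (((d : ℝ) - x₂) / ((d : ℝ) - x₁)) *
      (B ⌊x₁⌋₊ ^ (1 - x₁ + (⌊x₁⌋₊ : ℝ)) * ∏ i ∈ Finset.Icc (⌊x₁⌋₊ + 1) d, B i) ^
        ((1 : ℝ) / ((d : ℝ) + 1 - x₁)) :=
    mul_pos (Real.rpow_pos_of_pos hsq _) (Real.rpow_pos_of_pos hA1 _)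
  rw [ge_iff_le, ← Real.log_le_log_iff hRHSpos hLHSpos]
  -- compute log of each rpow term
  have hlogA : ∀ x : ℝ, 1 ≤ x → x < d →
      Real.log ((B ⌊x⌋₊ ^ (1 - x + (⌊x⌋₊ : ℝ)) * ∏ i ∈ Finset.Icc (⌊x⌋₊ + 1) d, B i) ^
        ((1 : ℝ) / ((d : ℝ) + 1 - x))) = glog d B x := by
    intro x hx hxd
    rw [Real.log_rpow (hA x hx hxd), Real.log_mul (ne_of_gt (Real.rpow_pos_of_pos (hBx x hx hxd) _))
      (ne_of_gt (hprod x hx)), Real.log_rpow (hBx x hx hxd), Real.log_prod]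
    · rw [glog]
      field_simp
    · intro i hi
      rw [Finset.mem_Icc] at hi
      have hk1 : 1 ≤ ⌊x⌋₊ := Nat.le_floor (by exact_mod_cast hx)
      exact ne_of_gt (hBpos i (by omega) hi.2)
  rw [Real.log_mul (ne_of_gt (Real.rpow_pos_of_pos hsq _)) (ne_of_gt (Real.rpow_pos_of_pos hA1 _)),
    hlogA x₂ hd1 h2, hlogA x₁ h1 (lt_trans h12 h2), Real.log_rpow hsq,
    Real.log_sqrt (by positivity),
    Real.log_div (by linarith : (d:ℝ) - x₂ ≠ 0) (by
      have : x₁ < (d:ℝ) := lt_trans h12 h2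
      linarith)]
  have := claim d B hd hBpos hHKZ (⌊x₂⌋₊ - ⌊x₁⌋₊) x₁ x₂ rfl h1 (le_of_lt h12) h2
  nlinarith [this]
end

section
/- Let (b_1,…,b_d) be a basis of a lattice L with Gram–Schmidt vectors b_i^* and coefficients μ_{j,k}, let A > 0, and fix 1 ≤ i ≤ d. Then the number of integer tuples (x_i,…,x_d) with ‖∑_{j=i}^{d} x_j b_j^{(i)}‖² ≤ A (where b_j^{(i)} is the projection of b_j orthogonally to span(b_1,…,b_{i-1})) is at most the number of integer tuples (x_i,…,x_d) with ∑_{j=i}^d x_j²·‖b_j^*‖² ≤ 4A. -/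
open Finset

/-- Gram–Schmidt orthogonalisation of a finite family of vectors. -/
noncomputable def gso {d n : ℕ} (b : Fin d → EuclideanSpace ℝ (Fin n)) :
    Fin d → EuclideanSpace ℝ (Fin n) :=
  letI : WellFoundedLT (Fin d) := inferInstance
  InnerProductSpace.gramSchmidt ℝ b

/-- The Gram–Schmidt coefficients `μ_{j,k} = ⟪b_j, b_k*⟫ / ‖b_k*‖²`. -/
noncomputable def gsoMu {d n : ℕ} (b : Fin d → EuclideanSpace ℝ (Fin n))
    (j k : Fin d) : ℝ :=
  (inner ℝ (gso b k) (b j) : ℝ) / ‖gso b k‖ ^ 2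

section Aux

variable {d n : ℕ} (b : Fin d → EuclideanSpace ℝ (Fin n))

lemma gso_expand (j : Fin d) :
    b j = gso b j + ∑ k ∈ Finset.Iio j, gsoMu b j k • gso b k := by
  haveI : WellFoundedLT (Fin d) := inferInstance
  have h := InnerProductSpace.gramSchmidt_def'' ℝ b j
  simpa [gso, gsoMu, RCLike.ofReal_real_eq_id] using h

lemma inner_gso_gt {j k : Fin d} (h : j < k) : (inner ℝ (gso b k) (b j) : ℝ) = 0 := by
  haveI : WellFoundedLT (Fin d) := inferInstance
  conv_lhs => rw [gso_expand b j]
  rw [inner_add_right, inner_sum]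
  have h1 : (inner ℝ (gso b k) (gso b j) : ℝ) = 0 := InnerProductSpace.gramSchmidt_orthogonal ℝ b h.ne'
  rw [h1, zero_add]
  apply Finset.sum_eq_zero
  intro l hl
  have h2' : (inner ℝ (gso b k) (gso b l) : ℝ) = 0 :=
    InnerProductSpace.gramSchmidt_orthogonal ℝ b ((Finset.mem_Iio.1 hl).trans h).ne'
  rw [real_inner_smul_right, h2', mul_zero]

lemma gsoMu_gt {j k : Fin d} (h : j < k) : gsoMu b j k = 0 := by
  rw [gsoMu, inner_gso_gt b h, zero_div]

lemma inner_gso_self (j : Fin d) : (inner ℝ (gso b j) (b j) : ℝ) = ‖gso b j‖ ^ 2 := by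
  haveI : WellFoundedLT (Fin d) := inferInstance
  conv_lhs => rw [gso_expand b j]
  rw [inner_add_right, real_inner_self_eq_norm_sq]
  have hz : ∑ l ∈ Finset.Iio j, (inner ℝ (gso b j) (gsoMu b j l • gso b l) : ℝ) = 0 := by
    apply Finset.sum_eq_zero
    intro l hl
    have h2 : (inner ℝ (gso b j) (gso b l) : ℝ) = 0 :=
      InnerProductSpace.gramSchmidt_orthogonal ℝ b (Finset.mem_Iio.1 hl).ne'
    rw [real_inner_smul_right, h2, mul_zero]
  rw [inner_sum, hz, add_zero]

lemma gso_ne_zero (hb : LinearIndependent ℝ b) (j : Fin d) : gso b j ≠ 0 := by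
  haveI : WellFoundedLT (Fin d) := inferInstance
  exact InnerProductSpace.gramSchmidt_ne_zero j hb

lemma gsoMu_self (hb : LinearIndependent ℝ b) (j : Fin d) : gsoMu b j j = 1 := by
  rw [gsoMu, inner_gso_self]
  exact div_self (pow_ne_zero 2 (norm_ne_zero_iff.2 (gso_ne_zero b hb j)))

lemma b_eq_sum (hb : LinearIndependent ℝ b) (j : Fin d) :
    b j = ∑ k, gsoMu b j k • gso b k := by
  have h1 : ∑ k ∈ Finset.Iic j, gsoMu b j k • gso b k
      = ∑ k, gsoMu b j k • gso b k := by
    apply Finset.sum_subset (Finset.subset_univ _)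
    intro k _ hk
    rw [gsoMu_gt b (by simpa using hk), zero_smul]
  rw [← h1, ← Finset.Iio_insert, Finset.sum_insert (by simp),
    gsoMu_self b hb, one_smul, ← gso_expand]

lemma proj_expand (hb : LinearIndependent ℝ b) (i : Fin d) (j : Fin d) :
    b j - ∑ k ∈ Finset.univ.filter (fun k : Fin d => k < i), gsoMu b j k • gso b k
      = ∑ k : {k : Fin d // i ≤ k}, gsoMu b j k.1 • gso b k.1 := by
  have hsplit := Finset.sum_filter_add_sum_filter_not Finset.univ
    (fun k : Fin d => k < i) (fun k => gsoMu b j k • gso b k)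
  have h2 : ∑ k ∈ Finset.univ.filter (fun k : Fin d => ¬ k < i),
      gsoMu b j k • gso b k = ∑ k : {k : Fin d // i ≤ k}, gsoMu b j k.1 • gso b k.1 := by
    apply Finset.sum_subtype
    intro k; simp [not_lt]
  rw [b_eq_sum b hb j, ← hsplit, ← h2]
  abel

lemma norm_sq_sum (i : Fin d) (c : {k : Fin d // i ≤ k} → ℝ) :
    ‖∑ k, c k • gso b k.1‖ ^ 2 = ∑ k, c k ^ 2 * ‖gso b k.1‖ ^ 2 := by
  haveI : WellFoundedLT (Fin d) := inferInstance
  have hdiag : ∀ l : {k : Fin d // i ≤ k},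
      (inner ℝ (∑ k, c k • gso b k.1) (gso b l.1) : ℝ) = c l * ‖gso b l.1‖ ^ 2 := by
    intro l
    rw [sum_inner, Finset.sum_eq_single l]
    · rw [real_inner_smul_left, real_inner_self_eq_norm_sq]
    · intro k _ hkl
      have h2 : (inner ℝ (gso b k.1) (gso b l.1) : ℝ) = 0 :=
        InnerProductSpace.gramSchmidt_orthogonal ℝ b (fun h => hkl (Subtype.ext h))
      rw [real_inner_smul_left, h2, mul_zero]
    · intro h; exact absurd (Finset.mem_univ l) h
  rw [← real_inner_self_eq_norm_sq, inner_sum]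
  refine Finset.sum_congr rfl fun l _ => ?_
  rw [real_inner_smul_right, hdiag]
  ring

lemma sq_round_le (c : ℝ) : ((round c : ℤ) : ℝ) ^ 2 ≤ 4 * c ^ 2 := by
  rcases eq_or_ne (round c) 0 with h | h
  · simp [h]; positivity
  · have h1 : (1 : ℝ) ≤ |((round c : ℤ) : ℝ)| := by
      exact_mod_cast Int.one_le_abs h
    have h2 := abs_sub_round c
    have h3 : |((round c : ℤ) : ℝ)| ≤ 2 * |c| := by
      have ha : |((round c : ℤ) : ℝ)| - |c| ≤ 1 / 2 := by
        calc |((round c : ℤ) : ℝ)| - |c| ≤ |((round c : ℤ) : ℝ) - c| :=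
              abs_sub_abs_le_abs_sub _ _
          _ = |c - ((round c : ℤ) : ℝ)| := abs_sub_comm _ _
          _ ≤ 1 / 2 := h2
      linarith
    calc ((round c : ℤ) : ℝ) ^ 2 = |((round c : ℤ) : ℝ)| ^ 2 := (sq_abs _).symm
      _ ≤ (2 * |c|) ^ 2 := by
          apply pow_le_pow_left₀ (abs_nonneg _) h3
      _ = 4 * c ^ 2 := by rw [mul_pow, sq_abs]; ring

end Aux

/-- The number of integer tuples `(x_i, …, x_d)` such that the projected
combination `∑_{j ≥ i} x_j b_j^{(i)}` (where `b_j^{(i)} = b_j - ∑_{k<i} μ_{j,k} b_k^*`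
is the projection of `b_j` orthogonally to `span(b_1, …, b_{i-1})`) has squared
norm at most `A` is at most the number of integer tuples `(x_i, …, x_d)` with
`∑_{j ≥ i} x_j² ‖b_j^*‖² ≤ 4A`. -/
theorem enum_count_le (d n : ℕ) (b : Fin d → EuclideanSpace ℝ (Fin n))
    (hb : LinearIndependent ℝ b) (A : ℝ) (hA : 0 < A) (i : Fin d) :
    Set.ncard {x : {j : Fin d // i ≤ j} → ℤ |
        ‖∑ j, (x j : ℝ) •
            (b j.1 - ∑ k ∈ Finset.univ.filter (fun k : Fin d => k < i),
              gsoMu b j.1 k • gso b k)‖ ^ 2 ≤ A} ≤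
      Set.ncard {x : {j : Fin d // i ≤ j} → ℤ |
        ∑ j, (x j : ℝ) ^ 2 * ‖gso b j.1‖ ^ 2 ≤ 4 * A} := by
  classical
  set L := {x : {j : Fin d // i ≤ j} → ℤ |
      ‖∑ j, (x j : ℝ) •
          (b j.1 - ∑ k ∈ Finset.univ.filter (fun k : Fin d => k < i),
            gsoMu b j.1 k • gso b k)‖ ^ 2 ≤ A} with hL
  set R := {x : {j : Fin d // i ≤ j} → ℤ |
      ∑ j, (x j : ℝ) ^ 2 * ‖gso b j.1‖ ^ 2 ≤ 4 * A} with hR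
  set c : ({j : Fin d // i ≤ j} → ℤ) → {j : Fin d // i ≤ j} → ℝ :=
    fun x k => ∑ j, (x j : ℝ) * gsoMu b j.1 k.1 with hcdef
  set φ : ({j : Fin d // i ≤ j} → ℤ) → {j : Fin d // i ≤ j} → ℤ :=
    fun x k => round (c x k) with hφdef
  -- the combination rewrites as an orthogonal sum
  have hvec : ∀ x : {j : Fin d // i ≤ j} → ℤ,
      ∑ j, (x j : ℝ) • (b j.1 - ∑ k ∈ Finset.univ.filter (fun k : Fin d => k < i),
        gsoMu b j.1 k • gso b k) = ∑ k, c x k • gso b k.1 := by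
    intro x
    simp_rw [proj_expand b hb i, Finset.smul_sum]
    rw [Finset.sum_comm]
    refine Finset.sum_congr rfl fun k _ => ?_
    rw [hcdef]
    simp only []
    rw [Finset.sum_smul]
    refine Finset.sum_congr rfl fun j _ => ?_
    rw [smul_smul]
  -- formula for c
  have hc : ∀ (x : {j : Fin d // i ≤ j} → ℤ) (k : {j : Fin d // i ≤ j}), c x k =
      (x k : ℝ) + ∑ j ∈ Finset.univ.filter (fun j : {j : Fin d // i ≤ j} => k < j),
        (x j : ℝ) * gsoMu b j.1 k.1 := by
    intro x k
    rw [hcdef]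
    simp only []
    rw [← Finset.sum_erase_add _ _ (Finset.mem_univ k), gsoMu_self b hb, mul_one, add_comm]
    congr 1
    symm
    apply Finset.sum_subset
    · intro j hj
      rw [Finset.mem_filter] at hj
      exact Finset.mem_erase.2 ⟨ne_of_gt hj.2, Finset.mem_univ _⟩
    · intro j hj hj'
      rw [Finset.mem_erase] at hj
      rw [Finset.mem_filter] at hj'
      push_neg at hj'
      have hle : j ≤ k := hj' (Finset.mem_univ j)
      have hjk : j.1 < k.1 :=
        lt_of_le_of_ne (Subtype.coe_le_coe.mpr hle) (fun hh => hj.1 (Subtype.ext hh))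
      rw [gsoMu_gt b hjk, mul_zero]
  -- injectivity of the rounding map
  have hinj : Function.Injective φ := by
    intro x x' h
    funext k0
    have key : ∀ k : {j : Fin d // i ≤ j}, x k = x' k := by
      intro k
      refine WellFoundedGT.induction (motive := fun k => x k = x' k) k ?_
      intro k IH
      have hφ : φ x k = φ x' k := congrFun h k
      have ht : ∑ j ∈ Finset.univ.filter (fun j : {j : Fin d // i ≤ j} => k < j),
          (x j : ℝ) * gsoMu b j.1 k.1
          = ∑ j ∈ Finset.univ.filter (fun j : {j : Fin d // i ≤ j} => k < j),
          (x' j : ℝ) * gsoMu b j.1 k.1 := by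
        refine Finset.sum_congr rfl fun j hj => ?_
        rw [IH j (Finset.mem_filter.1 hj).2]
      rw [hφdef] at hφ
      simp only [] at hφ
      rw [hc x k, hc x' k, ht, round_intCast_add, round_intCast_add] at hφ
      omega
    exact key k0
  -- the image of L under φ lands in R
  have himg : φ '' L ⊆ R := by
    rintro _ ⟨x, hx, rfl⟩
    rw [hL, Set.mem_setOf_eq] at hx
    rw [hvec x, norm_sq_sum b i] at hx
    rw [hR, Set.mem_setOf_eq]
    calc ∑ j, ((φ x j : ℤ) : ℝ) ^ 2 * ‖gso b j.1‖ ^ 2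
        ≤ ∑ j, 4 * (c x j) ^ 2 * ‖gso b j.1‖ ^ 2 := by
          refine Finset.sum_le_sum fun j _ => ?_
          exact mul_le_mul_of_nonneg_right (sq_round_le _) (by positivity)
      _ = 4 * ∑ j, (c x j) ^ 2 * ‖gso b j.1‖ ^ 2 := by
          rw [Finset.mul_sum]; exact Finset.sum_congr rfl fun j _ => by ring
      _ ≤ 4 * A := by linarith
  -- R is finite
  have hw : ∀ k : {j : Fin d // i ≤ j}, (0 : ℝ) < ‖gso b k.1‖ ^ 2 := fun k =>
    pow_pos (norm_pos_iff.2 (gso_ne_zero b hb k.1)) 2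
  have hRfin : R.Finite := by
    set B : {j : Fin d // i ≤ j} → ℤ :=
      fun k => |⌈4 * A / ‖gso b k.1‖ ^ 2⌉| + 1 with hB
    apply Set.Finite.subset (Set.finite_Icc (fun k => -B k) B)
    intro x hx
    rw [hR, Set.mem_setOf_eq] at hx
    have hbound : ∀ k : {j : Fin d // i ≤ j}, |x k| ≤ B k := by
      intro k
      have h1 : (x k : ℝ) ^ 2 * ‖gso b k.1‖ ^ 2 ≤ 4 * A := by
        refine le_trans ?_ hx
        exact Finset.single_le_sum
          (f := fun j : {j : Fin d // i ≤ j} => (x j : ℝ) ^ 2 * ‖gso b j.1‖ ^ 2)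
          (fun j _ => by positivity) (Finset.mem_univ k)
      have h2 : (x k : ℝ) ^ 2 ≤ 4 * A / ‖gso b k.1‖ ^ 2 :=
        (le_div_iff₀ (hw k)).2 h1
      have h3 : (x k : ℝ) ^ 2 ≤ ((|⌈4 * A / ‖gso b k.1‖ ^ 2⌉| : ℤ) : ℝ) := by
        refine h2.trans (le_trans (Int.le_ceil _) ?_)
        exact_mod_cast le_abs_self _
      have h4 : (x k) ^ 2 ≤ |⌈4 * A / ‖gso b k.1‖ ^ 2⌉| := by exact_mod_cast h3
      have h5 : |x k| ≤ (x k) ^ 2 + 1 := by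
        nlinarith [sq_abs (x k), abs_nonneg (x k), mul_self_nonneg (|x k| - 1)]
      rw [hB]
      simp only []
      linarith
    refine Set.mem_Icc.2 ⟨Pi.le_def.2 fun k => ?_, Pi.le_def.2 fun k => ?_⟩
    · show -B k ≤ x k
      exact (abs_le.1 (hbound k)).1
    · exact (abs_le.1 (hbound k)).2
  calc L.ncard = (φ '' L).ncard := (Set.ncard_image_of_injective L hinj).symm
    _ ≤ R.ncard := Set.ncard_le_ncard himg hRfin
end

section
/- Let d ≥ 1, A > 0, and positive reals c_i = ‖b_i^*‖ for i ≤ i_0 ≤ d. Then the number N of integer points in the ellipsoid {(y_{i_0},…,y_d) ∈ ℝ^{d-i_0+1} : ∑_{j≥i_0} y_j² c_j² ≤ 4A} satisfies N ≤ (4e(1+√π))^d · ∏_{j≥i_0} max(1, √A/(√d·c_j)). -/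
open Finset Real

lemma geom_part (s : ℝ) (hs : 0 < s) (N : ℕ) :
    ∑ n ∈ Finset.Icc 1 N, Real.exp (-(s * n)) ≤ 1 / s := by
  set r := Real.exp (-s) with hr
  have hr0 : 0 < r := Real.exp_pos _
  have hr1 : r < 1 := Real.exp_lt_one_iff.mpr (by linarith)
  have h1 : ∀ n ∈ Finset.Icc 1 N, Real.exp (-(s * n)) = r ^ n := by
    intro n _
    rw [hr, ← Real.exp_nat_mul]
    ring_nf
  rw [Finset.sum_congr rfl h1]
  have h2 : ∑ n ∈ Finset.Icc 1 N, r ^ n ≤ ∑' n : ℕ, r ^ (n + 1) := by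
    have hsum : Summable (fun n : ℕ => r ^ (n + 1)) := by
      apply Summable.comp_injective (summable_geometric_of_lt_one hr0.le hr1)
      exact fun a b h => by omega
    have := Summable.sum_le_tsum (f := fun n : ℕ => r ^ (n+1)) (Finset.range N)
      (fun i _ => by positivity) hsum
    refine le_trans (le_of_eq ?_) this
    rw [show Finset.Icc 1 N = Finset.Ico 1 (N+1) from (Finset.Ico_add_one_right_eq_Icc 1 N).symm, Finset.sum_Ico_eq_sum_range]
    simp [add_comm]
  have h3 : ∑' n : ℕ, r ^ (n + 1) = r * (1 - r)⁻¹ := by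
    have ht := tsum_geometric_of_lt_one hr0.le hr1
    calc ∑' n : ℕ, r ^ (n + 1) = ∑' n : ℕ, r * r ^ n := by
          congr 1; ext n; ring
      _ = r * (1 - r)⁻¹ := by rw [tsum_mul_left, ht]
  have h4 : r * (1 - r)⁻¹ ≤ 1 / s := by
    have hes : s + 1 ≤ Real.exp s := Real.add_one_le_exp s
    have hrs : r * Real.exp s = 1 := by rw [hr, ← Real.exp_add]; simp
    have h1r : 0 < 1 - r := by linarith
    rw [← div_eq_mul_inv, div_le_div_iff₀ h1r hs]
    nlinarith [Real.exp_pos s]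
  linarith

lemma nat_part (s : ℝ) (hs : 0 < s) (N : ℕ) :
    ∑ n ∈ Finset.Icc 1 N, Real.exp (-(s ^ 2 * (n : ℝ) ^ 2)) ≤ 2 / s := by
  have key : ∀ n ∈ Finset.Icc 1 N, Real.exp (-(s ^ 2 * (n:ℝ) ^ 2)) ≤
      (if (n:ℝ) * s ≤ 1 then (1:ℝ) else 0) + Real.exp (-(s * n)) := by
    intro n hn
    by_cases h : (n:ℝ) * s ≤ 1
    · simp only [h, if_pos]
      have : Real.exp (-(s ^ 2 * (n:ℝ) ^ 2)) ≤ 1 := by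
        apply Real.exp_le_one_iff.mpr
        simp only [neg_nonpos]
        positivity
      have := (Real.exp_pos (-(s * n))).le
      linarith
    · simp only [h, if_neg, not_false_iff, zero_add]
      apply Real.exp_le_exp.mpr
      push_neg at h
      have hn1 : (1:ℝ) ≤ (n:ℝ) := by
        exact_mod_cast (Finset.mem_Icc.mp hn).1
      nlinarith
  calc ∑ n ∈ Finset.Icc 1 N, Real.exp (-(s ^ 2 * (n : ℝ) ^ 2))
      ≤ ∑ n ∈ Finset.Icc 1 N, ((if (n:ℝ) * s ≤ 1 then (1:ℝ) else 0) + Real.exp (-(s * n))) :=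
        Finset.sum_le_sum key
    _ = (∑ n ∈ Finset.Icc 1 N, if (n:ℝ) * s ≤ 1 then (1:ℝ) else 0)
          + ∑ n ∈ Finset.Icc 1 N, Real.exp (-(s * n)) := Finset.sum_add_distrib
    _ ≤ 1 / s + 1 / s := by
        gcongr
        · -- indicator sum
          rw [Finset.sum_ite, Finset.sum_const, Finset.sum_const_zero, add_zero,
            nsmul_eq_mul, mul_one]
          have hsub : (Finset.Icc 1 N).filter (fun n : ℕ => (n:ℝ) * s ≤ 1) ⊆ Finset.Icc 1 ⌊1/s⌋₊ := by
            intro n hn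
            simp only [Finset.mem_filter, Finset.mem_Icc] at hn ⊢
            refine ⟨hn.1.1, Nat.le_floor ?_⟩
            rw [le_div_iff₀ hs]
            exact hn.2
          calc ((((Finset.Icc 1 N).filter (fun n : ℕ => (n:ℝ) * s ≤ 1)).card : ℕ) : ℝ)
              ≤ (((Finset.Icc 1 ⌊1/s⌋₊).card : ℕ) : ℝ) := by
                exact_mod_cast Finset.card_le_card hsub
            _ ≤ 1 / s := by
                rw [Nat.card_Icc, Nat.add_sub_cancel]
                exact Nat.floor_le (le_of_lt (by positivity : (0:ℝ) < 1/s))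
        · exact geom_part s hs N
    _ = 2 / s := by ring

lemma theta_int (s : ℝ) (hs : 0 < s) (B : ℤ) :
    ∑ y ∈ Finset.Icc (-B) B, Real.exp (-(s ^ 2 * (y : ℝ) ^ 2)) ≤ 2 + 4 / s := by
  set N := B.toNat with hN
  have hmaps : ∀ y ∈ Finset.Icc (-B) B, y.natAbs ∈ Finset.Icc 0 N := by
    intro y hy
    rw [Finset.mem_Icc] at hy ⊢
    omega
  rw [← Finset.sum_fiberwise_of_maps_to hmaps]
  have inner : ∀ b ∈ Finset.Icc 0 N,
      ∑ y ∈ (Finset.Icc (-B) B).filter (fun y => y.natAbs = b),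
        Real.exp (-(s ^ 2 * (y : ℝ) ^ 2)) ≤ 2 * Real.exp (-(s ^ 2 * (b : ℝ) ^ 2)) := by
    intro b _
    have hval : ∀ y ∈ (Finset.Icc (-B) B).filter (fun y => y.natAbs = b),
        Real.exp (-(s ^ 2 * (y : ℝ) ^ 2)) = Real.exp (-(s ^ 2 * (b : ℝ) ^ 2)) := by
      intro y hy
      rw [Finset.mem_filter] at hy
      congr 2
      rw [← hy.2, Nat.cast_natAbs, Int.cast_abs, sq_abs]
    rw [Finset.sum_congr rfl hval, Finset.sum_const, nsmul_eq_mul]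
    have hcard : ((Finset.Icc (-B) B).filter (fun y => y.natAbs = b)).card ≤ 2 := by
      have hsub : (Finset.Icc (-B) B).filter (fun y => y.natAbs = b) ⊆ {(b : ℤ), -(b : ℤ)} := by
        intro y hy
        rw [Finset.mem_filter] at hy
        rw [Finset.mem_insert, Finset.mem_singleton]
        omega
      exact le_trans (Finset.card_le_card hsub) (Finset.card_insert_le _ _)
    have := (Real.exp_pos (-(s ^ 2 * (b : ℝ) ^ 2))).le
    have h2 : (((Finset.Icc (-B) B).filter (fun y => y.natAbs = b)).card : ℝ) ≤ 2 := by
      exact_mod_cast hcard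
    nlinarith
  calc ∑ b ∈ Finset.Icc 0 N, ∑ y ∈ (Finset.Icc (-B) B).filter (fun y => y.natAbs = b),
        Real.exp (-(s ^ 2 * (y : ℝ) ^ 2))
      ≤ ∑ b ∈ Finset.Icc 0 N, 2 * Real.exp (-(s ^ 2 * (b : ℝ) ^ 2)) := Finset.sum_le_sum inner
    _ = 2 * (1 + ∑ b ∈ Finset.Icc 1 N, Real.exp (-(s ^ 2 * (b : ℝ) ^ 2))) := by
        have h0 : Finset.Icc 0 N = insert 0 (Finset.Icc 1 N) := by
          ext n; simp only [Finset.mem_Icc, Finset.mem_insert]; omega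
        rw [h0, Finset.sum_insert (by simp), ← Finset.mul_sum]
        push_cast
        ring_nf
        simp [Real.exp_zero]
    _ ≤ 2 * (1 + 2 / s) := by
        have := nat_part s hs N
        linarith
    _ = 2 + 4 / s := by ring

/-- The number of integer points in the ellipsoid
`{(y_{i₀},…,y_d) : ∑_j y_j² c_j² ≤ 4A}` is at most
`(4e(1+√π))^d · ∏_j max(1, √A/(√d c_j))`, where `c_j = ‖b_j^*‖ > 0`. -/
theorem ellipsoid_int_points_bound (d i₀ : ℕ) (hd : 1 ≤ d) (hi₀1 : 1 ≤ i₀)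
    (hi₀ : i₀ ≤ d) (A : ℝ) (hA : 0 < A) (c : ℕ → ℝ)
    (hc : ∀ j ∈ Finset.Icc i₀ d, 0 < c j) :
    (Set.ncard {x : {j : ℕ // j ∈ Finset.Icc i₀ d} → ℤ |
        ∑ j, (x j : ℝ) ^ 2 * c j.1 ^ 2 ≤ 4 * A} : ℝ) ≤
      (4 * Real.exp 1 * (1 + Real.sqrt π)) ^ d *
        ∏ j ∈ Finset.Icc i₀ d, max 1 (Real.sqrt A / (Real.sqrt d * c j)) := by
  classical
  set I := {j : ℕ // j ∈ Finset.Icc i₀ d}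
  set S := {x : I → ℤ | ∑ j, (x j : ℝ) ^ 2 * c j.1 ^ 2 ≤ 4 * A} with hS
  set B : ℕ → ℤ := fun j => ⌈Real.sqrt (4 * A) / c j⌉ with hB
  set P : Finset (I → ℤ) :=
    Fintype.piFinset (fun j : I => Finset.Icc (-(B j.1)) (B j.1)) with hP
  have hcI : ∀ j : I, 0 < c j.1 := fun j => hc j.1 j.2
  -- each point of S lies in P
  have hsub : S ⊆ ↑P := by
    intro x hx
    rw [hS, Set.mem_setOf_eq] at hx
    rw [Finset.mem_coe, hP, Fintype.mem_piFinset]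
    intro j
    have hterm : (x j : ℝ) ^ 2 * c j.1 ^ 2 ≤ 4 * A := by
      refine le_trans (Finset.single_le_sum (f := fun j : I => (x j : ℝ) ^ 2 * c j.1 ^ 2)
        (fun i _ => by positivity) (Finset.mem_univ j)) hx
    have hcj := hcI j
    have habs : |(x j : ℝ)| ≤ Real.sqrt (4 * A) / c j.1 := by
      rw [le_div_iff₀ hcj]
      have h1 : (|(x j : ℝ)| * c j.1) ^ 2 ≤ 4 * A := by
        rw [mul_pow, sq_abs]; exact hterm
      nlinarith [Real.sq_sqrt (by linarith : (0:ℝ) ≤ 4 * A),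
        Real.sqrt_nonneg (4 * A), abs_nonneg ((x j : ℝ)),
        mul_nonneg (abs_nonneg ((x j : ℝ))) hcj.le]
    have hceil : Real.sqrt (4 * A) / c j.1 ≤ (B j.1 : ℝ) := Int.le_ceil _
    rw [Finset.mem_Icc, ← abs_le]
    exact_mod_cast (le_trans habs hceil : |(x j : ℝ)| ≤ (B j.1 : ℝ))
  have hfin : S.Finite := Set.Finite.subset P.finite_toSet hsub
  set T := hfin.toFinset with hT
  have hTP : T ⊆ P := fun y hy => hsub (hfin.mem_toFinset.mp hy)
  rw [Set.ncard_eq_toFinset_card S hfin]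
  -- the scaled widths
  set s : I → ℝ := fun j => Real.sqrt d * c j.1 / (2 * Real.sqrt A) with hs
  have hspos : ∀ j : I, 0 < s j := by
    intro j
    have h1 : (0:ℝ) < Real.sqrt d := Real.sqrt_pos.mpr (by exact_mod_cast hd)
    have h2 : (0:ℝ) < Real.sqrt A := Real.sqrt_pos.mpr hA
    have := hcI j
    positivity
  have hsq : ∀ j : I, (s j) ^ 2 = (d : ℝ) * c j.1 ^ 2 / (4 * A) := by
    intro j
    rw [hs]
    have h1 : Real.sqrt d ^ 2 = (d : ℝ) := Real.sq_sqrt (by positivity)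
    have h2 : Real.sqrt A ^ 2 = A := Real.sq_sqrt hA.le
    rw [div_pow, mul_pow, h1, mul_pow, h2]
    norm_num
  -- pointwise: 1 ≤ exp d * ∏ exp(-(s j ^ 2 * x j ^ 2)) for x ∈ T
  have hpt : ∀ x ∈ T, (1:ℝ) ≤ Real.exp d * ∏ j : I, Real.exp (-(s j ^ 2 * (x j : ℝ) ^ 2)) := by
    intro x hx
    have hxS : x ∈ S := hfin.mem_toFinset.mp hx
    rw [hS, Set.mem_setOf_eq] at hxS
    rw [← Real.exp_sum, ← Real.exp_add]
    rw [show (1:ℝ) = Real.exp 0 from (Real.exp_zero).symm]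
    apply Real.exp_le_exp.mpr
    have hsum : ∑ j : I, s j ^ 2 * (x j : ℝ) ^ 2
        = (d : ℝ) / (4 * A) * ∑ j : I, (x j : ℝ) ^ 2 * c j.1 ^ 2 := by
      rw [Finset.mul_sum]
      refine Finset.sum_congr rfl fun j _ => ?_
      rw [hsq j]; field_simp
    have : ∑ j : I, s j ^ 2 * (x j : ℝ) ^ 2 ≤ (d : ℝ) := by
      rw [hsum]
      have h4A : (0:ℝ) < 4 * A := by linarith
      calc (d : ℝ) / (4 * A) * ∑ j : I, (x j : ℝ) ^ 2 * c j.1 ^ 2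
          ≤ (d : ℝ) / (4 * A) * (4 * A) := by
            apply mul_le_mul_of_nonneg_left hxS (by positivity)
        _ = (d : ℝ) := by field_simp
    have : ∑ j : I, -(s j ^ 2 * (x j : ℝ) ^ 2) ≥ -(d:ℝ) := by
      rw [Finset.sum_neg_distrib]
      linarith
    linarith
  -- main chain
  set m : ℕ → ℝ := fun j => max 1 (Real.sqrt A / (Real.sqrt d * c j)) with hm
  have hm1 : ∀ j, (1:ℝ) ≤ m j := fun j => le_max_left _ _
  have htheta : ∀ j : I, ∑ y ∈ Finset.Icc (-(B j.1)) (B j.1),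
      Real.exp (-(s j ^ 2 * (y : ℝ) ^ 2)) ≤ 4 * (1 + Real.sqrt π) * m j.1 := by
    intro j
    refine le_trans (theta_int (s j) (hspos j) (B j.1)) ?_
    have hq : 4 / s j = 8 * (Real.sqrt A / (Real.sqrt d * c j.1)) := by
      rw [hs]
      have h1 : (0:ℝ) < Real.sqrt d := Real.sqrt_pos.mpr (by exact_mod_cast hd)
      have h2 : (0:ℝ) < Real.sqrt A := Real.sqrt_pos.mpr hA
      have := hcI j
      field_simp
      ring
    rw [hq]
    have hqm : Real.sqrt A / (Real.sqrt d * c j.1) ≤ m j.1 := le_max_right _ _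
    have hpi : (3:ℝ) / 2 ≤ Real.sqrt π := by
      rw [show (3:ℝ)/2 = Real.sqrt ((3/2)^2) from (Real.sqrt_sq (by norm_num)).symm]
      apply Real.sqrt_le_sqrt
      nlinarith [Real.pi_gt_three]
    have := hm1 j.1
    nlinarith
  calc (T.card : ℝ)
      = ∑ _x ∈ T, (1:ℝ) := by simp
    _ ≤ ∑ x ∈ T, Real.exp d * ∏ j : I, Real.exp (-(s j ^ 2 * (x j : ℝ) ^ 2)) :=
        Finset.sum_le_sum hpt
    _ ≤ ∑ x ∈ P, Real.exp d * ∏ j : I, Real.exp (-(s j ^ 2 * (x j : ℝ) ^ 2)) := by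
        apply Finset.sum_le_sum_of_subset_of_nonneg hTP
        intro x _ _
        positivity
    _ = Real.exp d * ∑ x ∈ P, ∏ j : I, Real.exp (-(s j ^ 2 * (x j : ℝ) ^ 2)) := by
        rw [Finset.mul_sum]
    _ = Real.exp d * ∏ j : I, ∑ y ∈ Finset.Icc (-(B j.1)) (B j.1),
          Real.exp (-(s j ^ 2 * (y : ℝ) ^ 2)) := by
        rw [hP, Finset.prod_univ_sum]
    _ ≤ Real.exp d * ∏ j : I, (4 * (1 + Real.sqrt π) * m j.1) := by
        apply mul_le_mul_of_nonneg_left _ (Real.exp_pos _).le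
        apply Finset.prod_le_prod
        · intro j _
          apply Finset.sum_nonneg
          intro y _
          positivity
        · intro j _
          exact htheta j
    _ = Real.exp d * ((4 * (1 + Real.sqrt π)) ^ (Fintype.card I) * ∏ j : I, m j.1) := by
        rw [Finset.prod_mul_distrib, Finset.prod_const, Finset.card_univ]
    _ ≤ (Real.exp 1) ^ d * ((4 * (1 + Real.sqrt π)) ^ d * ∏ j : I, m j.1) := by
        have hcard : Fintype.card I ≤ d := by
          simp only [I, Fintype.card_coe, Nat.card_Icc]
          omega
        have hbase : (1:ℝ) ≤ 4 * (1 + Real.sqrt π) := by nlinarith [Real.sqrt_nonneg π]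
        have hprod : (0:ℝ) ≤ ∏ j : I, m j.1 :=
          Finset.prod_nonneg fun j _ => le_trans zero_le_one (hm1 j.1)
        have hexp : Real.exp (d:ℕ) = Real.exp 1 ^ (d:ℕ) := by
          rw [← Real.exp_nat_mul]; norm_num
        rw [hexp]
        apply mul_le_mul_of_nonneg_left
          (mul_le_mul_of_nonneg_right (pow_le_pow_right₀ hbase hcard) hprod)
          (by positivity)
    _ = (4 * Real.exp 1 * (1 + Real.sqrt π)) ^ d *
          ∏ j ∈ Finset.Icc i₀ d, max 1 (Real.sqrt A / (Real.sqrt d * c j)) := by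
        have hps : ∏ j : I, m j.1 = ∏ j ∈ Finset.Icc i₀ d, m j :=
          Finset.prod_coe_sort (Finset.Icc i₀ d) m
        rw [hps, ← mul_assoc, ← mul_pow,
          show Real.exp 1 * (4 * (1 + Real.sqrt π)) = 4 * Real.exp 1 * (1 + Real.sqrt π)
            from by ring]
end
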